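/- arXiv:2102.09204 — 10 statements merged into one kernel-verified Lean document; each statement's English description precedes it below -/
import Mathlib

section
/- Let p, q and r be probability measures on a measurable space. Then H((p+q)/2 | r) ≤ (1/2)·H(p|r) + (1/2)·H(q|r) − (1/2)·‖p − q‖_TV², where (p+q)/2 denotes the average of the two measures. -/
open MeasureTheory
open scoped ENNReal NNReal Classical

section AuxCalc

open Real Set

lemma relEnt_auxA1 {u : ℝ} (hu : 0 ≤ u) : u - u^2/2 ≤ Real.log (1+u) := by
  have hder : ∀ x ∈ Ioi (0:ℝ), HasDerivAt (fun u : ℝ => Real.log (1+u) - u + u^2/2)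
      (x^2/(1+x)) x := by
    intro x hx
    simp only [mem_Ioi] at hx
    have hl : HasDerivAt (fun u : ℝ => 1 + u) 1 x := (hasDerivAt_id' x).const_add 1
    have := ((hl.log (by positivity : (0:ℝ) < 1 + x).ne').sub (hasDerivAt_id' x)).add
      ((hasDerivAt_pow 2 x).div_const 2)
    refine this.congr_deriv ?_
    have h1x : (0:ℝ) < 1 + x := by linarith
    field_simp
    ring
  have key : MonotoneOn (fun u : ℝ => Real.log (1+u) - u + u^2/2) (Ici 0) := by
    apply monotoneOn_of_deriv_nonneg (convex_Ici 0)
    · refine ((ContinuousOn.log (by fun_prop) ?_).sub continuousOn_id).add (by fun_prop)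
      intro x hx; simp only [mem_Ici] at hx; intro h; linarith
    · intro x hx; rw [interior_Ici] at hx
      exact (hder x hx).differentiableAt.differentiableWithinAt
    · intro x hx; rw [interior_Ici] at hx
      rw [(hder x hx).deriv]
      simp only [mem_Ioi] at hx
      positivity
  have := key (self_mem_Ici) (mem_Ici.mpr hu) hu
  simp only [add_zero, Real.log_one] at this
  norm_num at this
  linarith

lemma relEnt_auxA2 {u : ℝ} (hu : 0 ≤ u) (hu1 : u < 1) : Real.log (1-u) ≤ -u - u^2/2 := by
  have hder : ∀ x ∈ Ioo (0:ℝ) 1, HasDerivAt (fun u : ℝ => -Real.log (1-u) - u - u^2/2)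
      (x^2/(1-x)) x := by
    intro x hx
    obtain ⟨hx0, hx1⟩ := hx
    have h1x : (0:ℝ) < 1 - x := by linarith
    have hl : HasDerivAt (fun u : ℝ => 1 - u) (-1) x := by
      simpa using (hasDerivAt_id' x).const_sub 1
    have := (((hl.log h1x.ne').neg).sub (hasDerivAt_id' x)).sub
      ((hasDerivAt_pow 2 x).div_const 2)
    refine this.congr_deriv ?_
    field_simp
    ring
  have key : MonotoneOn (fun u : ℝ => -Real.log (1-u) - u - u^2/2) (Icc 0 u) := by
    apply monotoneOn_of_deriv_nonneg (convex_Icc 0 u)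
    · refine (((ContinuousOn.log (by fun_prop) ?_).neg).sub continuousOn_id).sub (by fun_prop)
      intro x hx; obtain ⟨hx0, hxu⟩ := hx; intro h; linarith
    · intro x hx; rw [interior_Icc] at hx
      exact (hder x ⟨hx.1, lt_trans hx.2 hu1⟩).differentiableAt.differentiableWithinAt
    · intro x hx; rw [interior_Icc] at hx
      rw [(hder x ⟨hx.1, lt_trans hx.2 hu1⟩).deriv]
      have : (0:ℝ) < 1 - x := by have := lt_trans hx.2 hu1; linarith
      positivity
  have := key (left_mem_Icc.mpr hu) (right_mem_Icc.mpr hu) hu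
  simp only [sub_zero, Real.log_one] at this
  norm_num at this
  linarith

lemma relEnt_auxL1 {u : ℝ} (hu : 0 ≤ u) : u + u^2/2 - u^3/6 ≤ (1+u) * Real.log (1+u) := by
  have hder : ∀ x ∈ Ioi (0:ℝ),
      HasDerivAt (fun u : ℝ => (1+u) * Real.log (1+u) - u - u^2/2 + u^3/6)
      (Real.log (1+x) - x + x^2/2) x := by
    intro x hx
    simp only [mem_Ioi] at hx
    have h1x : (0:ℝ) < 1 + x := by linarith
    have hl : HasDerivAt (fun u : ℝ => 1 + u) 1 x := (hasDerivAt_id' x).const_add 1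
    have := (((hl.mul (hl.log h1x.ne')).sub (hasDerivAt_id' x)).sub
      ((hasDerivAt_pow 2 x).div_const 2)).add ((hasDerivAt_pow 3 x).div_const 6)
    refine this.congr_deriv ?_
    push_cast
    field_simp
    ring
  have key : MonotoneOn (fun u : ℝ => (1+u) * Real.log (1+u) - u - u^2/2 + u^3/6) (Ici 0) := by
    apply monotoneOn_of_deriv_nonneg (convex_Ici 0)
    · refine (((by fun_prop : ContinuousOn (fun u : ℝ => 1+u) (Ici 0)).mul
        (ContinuousOn.log (by fun_prop) ?_)).sub continuousOn_id).sub (by fun_prop)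
        |>.add (by fun_prop)
      intro x hx; simp only [mem_Ici] at hx; intro h; linarith
    · intro x hx; rw [interior_Ici] at hx
      exact (hder x hx).differentiableAt.differentiableWithinAt
    · intro x hx; rw [interior_Ici] at hx
      rw [(hder x hx).deriv]
      simp only [mem_Ioi] at hx
      have := relEnt_auxA1 (le_of_lt hx)
      linarith
  have := key (self_mem_Ici) (mem_Ici.mpr hu) hu
  simp only [add_zero, Real.log_one, mul_zero] at this
  norm_num at this
  linarith

lemma relEnt_auxL2 {u : ℝ} (hu : 0 ≤ u) (hu1 : u < 1) :
    -u + u^2/2 + u^3/6 ≤ (1-u) * Real.log (1-u) := by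
  have hder : ∀ x ∈ Ioo (0:ℝ) 1,
      HasDerivAt (fun u : ℝ => (1-u) * Real.log (1-u) + u - u^2/2 - u^3/6)
      (-Real.log (1-x) - x - x^2/2) x := by
    intro x hx
    obtain ⟨hx0, hx1⟩ := hx
    have h1x : (0:ℝ) < 1 - x := by linarith
    have hl : HasDerivAt (fun u : ℝ => 1 - u) (-1) x := by
      simpa using (hasDerivAt_id' x).const_sub 1
    have := (((hl.mul (hl.log h1x.ne')).add (hasDerivAt_id' x)).sub
      ((hasDerivAt_pow 2 x).div_const 2)).sub ((hasDerivAt_pow 3 x).div_const 6)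
    refine this.congr_deriv ?_
    push_cast
    field_simp
    ring
  have key : MonotoneOn (fun u : ℝ => (1-u) * Real.log (1-u) + u - u^2/2 - u^3/6) (Icc 0 u) := by
    apply monotoneOn_of_deriv_nonneg (convex_Icc 0 u)
    · refine (((by fun_prop : ContinuousOn (fun u : ℝ => 1-u) (Icc 0 u)).mul
        (ContinuousOn.log (by fun_prop) ?_)).add continuousOn_id).sub (by fun_prop)
        |>.sub (by fun_prop)
      intro x hx; obtain ⟨hx0, hxu⟩ := hx; intro h; linarith
    · intro x hx; rw [interior_Icc] at hx
      exact (hder x ⟨hx.1, lt_trans hx.2 hu1⟩).differentiableAt.differentiableWithinAt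
    · intro x hx; rw [interior_Icc] at hx
      rw [(hder x ⟨hx.1, lt_trans hx.2 hu1⟩).deriv]
      have h1 := relEnt_auxA2 (le_of_lt hx.1) (lt_trans hx.2 hu1)
      linarith
  have := key (left_mem_Icc.mpr hu) (right_mem_Icc.mpr hu) hu
  simp only [sub_zero, Real.log_one, mul_zero] at this
  norm_num at this
  linarith

lemma relEnt_keyU {u : ℝ} (hu : 0 ≤ u) (hu1 : u ≤ 1) :
    u^2 ≤ (1+u) * Real.log (1+u) + (1-u) * Real.log (1-u) := by
  rcases eq_or_lt_of_le hu1 with h1 | h1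
  · rw [h1]
    norm_num [Real.log_zero]
    have := Real.log_two_gt_d9
    nlinarith
  · have h2 := relEnt_auxL1 hu
    have h3 := relEnt_auxL2 hu h1
    nlinarith

/-- Key pointwise inequality: `(x-1)² ≤ x log x + (2-x) log (2-x)` for `x ∈ [0,2]`. -/
lemma relEnt_keyX {x : ℝ} (h0 : 0 ≤ x) (h2 : x ≤ 2) :
    (x-1)^2 ≤ x * Real.log x + (2-x) * Real.log (2-x) := by
  rcases le_total 1 x with h | h
  · have hk := relEnt_keyU (u := x - 1) (by linarith) (by linarith)
    have e1 : 1 + (x-1) = x := by ring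
    have e2 : 1 - (x-1) = 2 - x := by ring
    rw [e1, e2] at hk
    nlinarith [hk]
  · have hk := relEnt_keyU (u := 1 - x) (by linarith) (by linarith)
    have e1 : 1 + (1-x) = 2 - x := by ring
    have e2 : 1 - (1-x) = x := by ring
    rw [e1, e2] at hk
    nlinarith [hk]

/-- Bound `|x log x| ≤ 2` on `[0,2]`. -/
lemma relEnt_xlogx_abs_le {x : ℝ} (h0 : 0 ≤ x) (h2 : x ≤ 2) : |x * Real.log x| ≤ 2 := by
  rcases eq_or_lt_of_le h0 with h | h
  · simp [← h]
  rcases le_total x 1 with hx1 | hx1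
  · have hlog : 1 - x⁻¹ ≤ Real.log x := Real.one_sub_inv_le_log_of_pos h
    have hle0 : Real.log x ≤ 0 := Real.log_nonpos h0 hx1
    rw [abs_of_nonpos (mul_nonpos_of_nonneg_of_nonpos h0 hle0)]
    have hinv : x * (x⁻¹ - 1) = 1 - x := by field_simp
    nlinarith [hlog]
  · have h1 : Real.log x ≤ x - 1 := Real.log_le_sub_one_of_pos h
    have h2' : 0 ≤ Real.log x := Real.log_nonneg hx1
    rw [abs_of_nonneg (by positivity)]
    nlinarith

end AuxCalc

lemma relEnt_ereal_half : (1/2 : EReal) = ((1/2:ℝ) : EReal) := by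
  rw [one_div, one_div, EReal.coe_inv]
  norm_cast

lemma relEnt_half_pos : (0 : EReal) < 1/2 := by
  rw [relEnt_ereal_half]
  exact_mod_cast (by norm_num : (0:ℝ) < 1/2)

lemma relEnt_half_mul_ne_bot {x : EReal} (hx : x ≠ ⊥) : (1/2 : EReal) * x ≠ ⊥ := by
  induction x using EReal.rec with
  | bot => exact absurd rfl hx
  | coe y => rw [relEnt_ereal_half, ← EReal.coe_mul]; exact EReal.coe_ne_bot _
  | top => rw [EReal.mul_top_of_pos relEnt_half_pos]; exact top_ne_bot

/-- Relative entropy `H(p|r) = ∫ log (dp/dr) dp ∈ [0,∞]` when `p ≪ r` (with value `+∞` when the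
integrand is not integrable), and `H(p|r) = +∞` otherwise. -/
noncomputable def relEntropy {Y : Type*} [MeasurableSpace Y] (p r : Measure Y) : EReal :=
  if p ≪ r ∧ Integrable (llr p r) p then ((∫ x, llr p r x ∂p : ℝ) : EReal) else ⊤

/-- Total variation distance `‖p − q‖_TV = sup {|p(A) − q(A)| : A measurable}`. -/
noncomputable def tvDist {Y : Type*} [MeasurableSpace Y] (p q : Measure Y) : ℝ :=
  ⨆ A : {A : Set Y // MeasurableSet A}, |(p A.1).toReal - (q A.1).toReal|

lemma relEntropy_ne_bot {Y : Type*} [MeasurableSpace Y] (p r : Measure Y) :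
    relEntropy p r ≠ ⊥ := by
  rw [relEntropy]
  split_ifs
  · exact EReal.coe_ne_bot _
  · exact top_ne_bot

/-- `H((p+q)/2 | r) ≤ (1/2)·H(p|r) + (1/2)·H(q|r) − (1/2)·‖p − q‖_TV²`. -/
theorem relEntropy_average_le {Y : Type*} [MeasurableSpace Y] (p q r : Measure Y)
    [IsProbabilityMeasure p] [IsProbabilityMeasure q] [IsProbabilityMeasure r] :
    relEntropy ((2 : ℝ≥0∞)⁻¹ • (p + q)) r ≤
      (1/2 : EReal) * relEntropy p r + (1/2 : EReal) * relEntropy q r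
        - (1/2 : EReal) * ((tvDist p q ^ 2 : ℝ) : EReal) := by
  classical
  set m : Measure Y := (2 : ℝ≥0∞)⁻¹ • (p + q) with hm
  -- the tvDist term is a real coercion
  have htv_coe : ∃ c : ℝ, (1/2 : EReal) * ((tvDist p q ^ 2 : ℝ) : EReal) = (c : EReal) :=
    ⟨1/2 * tvDist p q ^ 2, by rw [relEnt_ereal_half, ← EReal.coe_mul]⟩
  obtain ⟨c, hc⟩ := htv_coe
  by_cases hp : p ≪ r ∧ Integrable (llr p r) p
  swap
  · have h1 : relEntropy p r = ⊤ := by rw [relEntropy, if_neg hp]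
    rw [h1, EReal.mul_top_of_pos relEnt_half_pos, hc,
      EReal.top_add_of_ne_bot (relEnt_half_mul_ne_bot (relEntropy_ne_bot q r)),
      EReal.top_sub_coe]
    exact le_top
  by_cases hq : q ≪ r ∧ Integrable (llr q r) q
  swap
  · have h1 : relEntropy q r = ⊤ := by rw [relEntropy, if_neg hq]
    rw [h1, EReal.mul_top_of_pos relEnt_half_pos, hc,
      EReal.add_top_of_ne_bot (relEnt_half_mul_ne_bot (relEntropy_ne_bot p r)),
      EReal.top_sub_coe]
    exact le_top
  -- main case
  haveI hmP : IsProbabilityMeasure m := by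
    constructor
    rw [hm]
    simp only [Measure.smul_apply, Measure.add_apply, measure_univ, smul_eq_mul]
    rw [one_add_one_eq_two]
    exact ENNReal.inv_mul_cancel (by norm_num) (by norm_num)
  have hpm : p ≪ m := by
    refine Measure.AbsolutelyContinuous.mk fun s hs h0 => ?_
    rw [hm] at h0
    simp only [Measure.smul_apply, Measure.add_apply, smul_eq_mul] at h0
    rcases mul_eq_zero.mp h0 with h | h
    · exact absurd h (by norm_num)
    · exact (add_eq_zero.mp h).1
  have hqm : q ≪ m := by
    refine Measure.AbsolutelyContinuous.mk fun s hs h0 => ?_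
    rw [hm] at h0
    simp only [Measure.smul_apply, Measure.add_apply, smul_eq_mul] at h0
    rcases mul_eq_zero.mp h0 with h | h
    · exact absurd h (by norm_num)
    · exact (add_eq_zero.mp h).2
  have hmr : m ≪ r := by
    rw [hm]
    exact (Measure.smul_absolutelyContinuous).trans
      (Measure.AbsolutelyContinuous.add_left hp.1 hq.1)
  have h2m : p + q = (2:ℝ≥0∞) • m := by
    rw [hm, smul_smul, ENNReal.mul_inv_cancel (by norm_num) (by norm_num), one_smul]
  -- density facts
  set φ : Y → ℝ := fun x => (p.rnDeriv m x).toReal with hφ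
  have hφmeas : Measurable φ := (Measure.measurable_rnDeriv p m).ennreal_toReal
  have hsum2 : ∀ᵐ x ∂m, p.rnDeriv m x + q.rnDeriv m x = 2 := by
    have h1 : (p+q).rnDeriv m =ᵐ[m] p.rnDeriv m + q.rnDeriv m := Measure.rnDeriv_add p q m
    rw [h2m] at h1
    have h2 : ((2:ℝ≥0∞) • m).rnDeriv m =ᵐ[m] fun _ => 2 := by
      filter_upwards [Measure.rnDeriv_smul_left_of_ne_top m m
        (by norm_num : (2:ℝ≥0∞) ≠ ∞), Measure.rnDeriv_self m] with x h h'
      rw [h, Pi.smul_apply, h', smul_eq_mul, mul_one]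
    filter_upwards [h1.symm.trans h2] with x hx
    simpa using hx
  have hφae : ∀ᵐ x ∂m, 0 ≤ φ x ∧ φ x ≤ 2 ∧ (q.rnDeriv m x).toReal = 2 - φ x := by
    filter_upwards [hsum2] with x hx
    have ha : p.rnDeriv m x ≤ 2 := by rw [← hx]; exact le_self_add
    have hb : q.rnDeriv m x ≤ 2 := by rw [← hx]; exact le_add_self
    have hane : p.rnDeriv m x ≠ ∞ := ne_top_of_le_ne_top (by norm_num) ha
    have hbne : q.rnDeriv m x ≠ ∞ := ne_top_of_le_ne_top (by norm_num) hb
    have hto : φ x + (q.rnDeriv m x).toReal = 2 := by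
      rw [hφ]
      rw [← ENNReal.toReal_add hane hbne, hx]
      norm_num
    have hbnn : 0 ≤ (q.rnDeriv m x).toReal := ENNReal.toReal_nonneg
    refine ⟨ENNReal.toReal_nonneg, by linarith, by linarith⟩
  -- integrability of x log x type integrands
  have hint_philogphi : Integrable (fun x => φ x * Real.log (φ x)) m := by
    refine Integrable.mono' (integrable_const 2)
      ((hφmeas.mul (Real.measurable_log.comp hφmeas)).aestronglyMeasurable) ?_
    filter_upwards [hφae] with x hx
    rw [Real.norm_eq_abs]
    exact relEnt_xlogx_abs_le hx.1 hx.2.1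
  have hint_psilogpsi : Integrable (fun x => (q.rnDeriv m x).toReal *
      Real.log ((q.rnDeriv m x).toReal)) m := by
    have hψmeas : Measurable (fun x => (q.rnDeriv m x).toReal) :=
      (Measure.measurable_rnDeriv q m).ennreal_toReal
    refine Integrable.mono' (integrable_const 2)
      ((hψmeas.mul (Real.measurable_log.comp hψmeas)).aestronglyMeasurable) ?_
    filter_upwards [hφae] with x hx
    rw [Real.norm_eq_abs, hx.2.2]
    exact relEnt_xlogx_abs_le (by linarith [hx.2.1]) (by linarith [hx.1])
  -- integrability of llr p m w.r.t. p, and the change-of-measure formula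
  have hint_pm : Integrable (llr p m) p := by
    rw [← integrable_rnDeriv_smul_iff hpm]
    simpa [llr_def, smul_eq_mul] using hint_philogphi
  have hint_qm : Integrable (llr q m) q := by
    rw [← integrable_rnDeriv_smul_iff hqm]
    simpa [llr_def, smul_eq_mul] using hint_psilogpsi
  have heq_pm : ∫ x, llr p m x ∂p = ∫ x, φ x * Real.log (φ x) ∂m := by
    rw [← integral_rnDeriv_smul hpm (f := llr p m)]
    simp [llr_def, smul_eq_mul, hφ]
  have heq_qm : ∫ x, llr q m x ∂q
      = ∫ x, (q.rnDeriv m x).toReal * Real.log ((q.rnDeriv m x).toReal) ∂m := by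
    rw [← integral_rnDeriv_smul hqm (f := llr q m)]
    simp [llr_def, smul_eq_mul]
  -- chain rule
  have hchain : ∀ (μ : Measure Y), IsProbabilityMeasure μ → μ ≪ m → μ ≪ r →
      llr μ r =ᵐ[μ] fun x => llr μ m x + llr m r x := by
    intro μ _ hμm hμr
    have h1 : μ.rnDeriv m * m.rnDeriv r =ᵐ[r] μ.rnDeriv r := Measure.rnDeriv_mul_rnDeriv hμm
    filter_upwards [hμr.ae_le h1, Measure.rnDeriv_pos hμm, hμm.ae_le (Measure.rnDeriv_pos hmr),
      hμm.ae_le (Measure.rnDeriv_lt_top μ m), hμr.ae_le (Measure.rnDeriv_lt_top m r)]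
      with x hmul hpos1 hpos2 hfin1 hfin2
    rw [Pi.mul_apply] at hmul
    simp only [llr_def]
    rw [← hmul, ENNReal.toReal_mul, Real.log_mul
      (ENNReal.toReal_pos hpos1.ne' hfin1.ne).ne' (ENNReal.toReal_pos hpos2.ne' hfin2.ne).ne']
  have hchain_p := hchain p inferInstance hpm hp.1
  have hchain_q := hchain q inferInstance hqm hq.1
  -- integrability of llr m r
  have hint_mr_p : Integrable (llr m r) p := by
    refine ((hp.2.sub hint_pm).congr ?_)
    filter_upwards [hchain_p] with x hx
    simp [hx]
  have hint_mr_q : Integrable (llr m r) q := by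
    refine ((hq.2.sub hint_qm).congr ?_)
    filter_upwards [hchain_q] with x hx
    simp [hx]
  have hint_mr_m : Integrable (llr m r) m := by
    rw [hm]
    rw [integrable_smul_measure (c := (2:ℝ≥0∞)⁻¹) (by norm_num) (by norm_num)]
    exact hint_mr_p.add_measure hint_mr_q
  -- splitting identities
  have hsplit_p : ∫ x, llr p r x ∂p = ∫ x, llr p m x ∂p + ∫ x, llr m r x ∂p := by
    rw [integral_congr_ae hchain_p, integral_add hint_pm hint_mr_p]
  have hsplit_q : ∫ x, llr q r x ∂q = ∫ x, llr q m x ∂q + ∫ x, llr m r x ∂q := by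
    rw [integral_congr_ae hchain_q, integral_add hint_qm hint_mr_q]
  have hint_m_eq : ∫ x, llr m r x ∂m
      = (1/2 : ℝ) * (∫ x, llr m r x ∂p + ∫ x, llr m r x ∂q) := by
    have : ∫ x, llr m r x ∂m = ∫ x, llr m r x ∂((2:ℝ≥0∞)⁻¹ • (p + q)) := rfl
    rw [this, integral_smul_measure, integral_add_measure hint_mr_p hint_mr_q]
    norm_num
  -- the Jensen-Shannon part
  set g : Y → ℝ := fun x => φ x - 1 with hg
  have hint_φ : Integrable φ m := by
    refine Integrable.mono' (integrable_const 2) hφmeas.aestronglyMeasurable ?_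
    filter_upwards [hφae] with x hx
    rw [Real.norm_eq_abs, abs_of_nonneg hx.1]
    exact hx.2.1
  have hint_g : Integrable g m := hint_φ.sub (integrable_const 1)
  have hint_gabs : Integrable (fun x => |g x|) m := hint_g.abs
  have hint_gsq : Integrable (fun x => g x ^ 2) m := by
    refine Integrable.mono' (integrable_const 1)
      (((hφmeas.sub measurable_const).pow_const 2).aestronglyMeasurable) ?_
    filter_upwards [hφae] with x hx
    rw [Real.norm_eq_abs, abs_of_nonneg (sq_nonneg _)]
    show (φ x - 1) ^ 2 ≤ 1
    nlinarith [hx.1, hx.2.1]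
  -- total integral of g is zero
  have hgint0 : ∫ x, g x ∂m = 0 := by
    rw [hg]
    rw [integral_sub hint_φ (integrable_const 1)]
    rw [hφ]
    rw [Measure.integral_toReal_rnDeriv hpm]
    simp [measure_univ]
  -- N := ∫ |g|
  set N : ℝ := ∫ x, |g x| ∂m with hN
  -- tvDist ≤ N
  haveI : Nonempty {A : Set Y // MeasurableSet A} := ⟨⟨∅, MeasurableSet.empty⟩⟩
  have hbound : ∀ A : Set Y, MeasurableSet A → |(p A).toReal - (q A).toReal| ≤ N := by
    intro A hA
    have hpA : (p A).toReal = ∫ x in A, φ x ∂m := (Measure.setIntegral_toReal_rnDeriv hpm A).symm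
    have hqA : (q A).toReal = ∫ x in A, 2 - φ x ∂m := by
      rw [← measureReal_def, ← Measure.setIntegral_toReal_rnDeriv hqm A]
      refine integral_congr_ae (ae_restrict_of_ae ?_)
      filter_upwards [hφae] with x hx
      exact hx.2.2
    have e1 : ∫ x in A, (2 - φ x) ∂m = ∫ x in A, (2:ℝ) ∂m - ∫ x in A, φ x ∂m :=
      integral_sub (integrable_const 2).integrableOn hint_φ.integrableOn
    have e2 : ∫ x in A, (2:ℝ) ∂m = 2 * (m A).toReal := by
      rw [setIntegral_const]
      rw [smul_eq_mul, measureReal_def]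
      ring
    have eg : ∫ x in A, g x ∂m = ∫ x in A, φ x ∂m - (m A).toReal := by
      have : ∫ x in A, g x ∂m = ∫ x in A, φ x ∂m - ∫ x in A, (1:ℝ) ∂m :=
        integral_sub hint_φ.integrableOn (integrable_const 1).integrableOn
      rw [this, setIntegral_const, smul_eq_mul, mul_one, measureReal_def]
    have hdiff : (p A).toReal - (q A).toReal = 2 * ∫ x in A, g x ∂m := by
      rw [hpA, hqA, e1, e2, eg]
      ring
    have hcompl : ∫ x in A, g x ∂m = - ∫ x in Aᶜ, g x ∂m := by
      have := integral_add_compl hA hint_g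
      rw [hgint0] at this
      linarith
    have h1 : |∫ x in A, g x ∂m| ≤ ∫ x in A, |g x| ∂m := by
      simpa [Real.norm_eq_abs] using norm_integral_le_integral_norm (μ := m.restrict A) g
    have h2 : |∫ x in Aᶜ, g x ∂m| ≤ ∫ x in Aᶜ, |g x| ∂m := by
      simpa [Real.norm_eq_abs] using norm_integral_le_integral_norm (μ := m.restrict Aᶜ) g
    have h3 : ∫ x in A, |g x| ∂m + ∫ x in Aᶜ, |g x| ∂m = N := integral_add_compl hA hint_gabs
    rw [hdiff, abs_mul, abs_two]
    rw [hcompl] at h1 ⊢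
    rw [abs_neg] at h1 ⊢
    linarith
  have hbddAbove : BddAbove (Set.range fun A : {A : Set Y // MeasurableSet A} =>
      |(p A.1).toReal - (q A.1).toReal|) := by
    refine ⟨N, ?_⟩
    rintro x ⟨A, rfl⟩
    exact hbound A.1 A.2
  have hTN : tvDist p q ≤ N := by
    rw [tvDist]
    exact ciSup_le fun A => hbound A.1 A.2
  have hT0 : 0 ≤ tvDist p q := by
    refine le_trans (abs_nonneg _) (le_ciSup hbddAbove ⟨∅, MeasurableSet.empty⟩)
  -- N² ≤ ∫ g²  (Jensen / variance)
  have hmemlp : MemLp (fun x => |g x|) 2 m := by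
    refine MemLp.of_bound ((hφmeas.sub measurable_const).abs.aestronglyMeasurable) 1 ?_
    filter_upwards [hφae] with x hx
    rw [Real.norm_eq_abs, abs_abs]
    have hgx : g x = φ x - 1 := rfl
    rw [hgx, abs_le]
    constructor <;> linarith [hx.1, hx.2.1]
  have hNsq : N ^ 2 ≤ ∫ x, g x ^ 2 ∂m := by
    have hv := ProbabilityTheory.variance_nonneg (fun x => |g x|) m
    rw [ProbabilityTheory.variance_eq_sub hmemlp] at hv
    have he : ∫ x, ((fun x => |g x|) ^ 2) x ∂m = ∫ x, g x ^ 2 ∂m := by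
      refine integral_congr_ae ?_
      filter_upwards with x
      simp [sq_abs]
    rw [he] at hv
    rw [hN]
    linarith
  -- pointwise Jensen-Shannon bound
  have hJS : ∫ x, g x ^ 2 ∂m ≤ ∫ x, (φ x * Real.log (φ x)
      + (q.rnDeriv m x).toReal * Real.log ((q.rnDeriv m x).toReal)) ∂m := by
    refine integral_mono_ae hint_gsq (hint_philogphi.add hint_psilogpsi) ?_
    filter_upwards [hφae] with x hx
    rw [hg, hx.2.2]
    exact relEnt_keyX hx.1 hx.2.1
  -- assemble the real inequality
  have hintsum : ∫ x, (φ x * Real.log (φ x)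
      + (q.rnDeriv m x).toReal * Real.log ((q.rnDeriv m x).toReal)) ∂m
      = ∫ x, llr p m x ∂p + ∫ x, llr q m x ∂q := by
    rw [integral_add hint_philogphi hint_psilogpsi, heq_pm, heq_qm]
  have hTsq : tvDist p q ^ 2 ≤ ∫ x, llr p m x ∂p + ∫ x, llr q m x ∂q := by
    calc tvDist p q ^ 2 ≤ N ^ 2 := by
          apply pow_le_pow_left₀ hT0 hTN
      _ ≤ ∫ x, g x ^ 2 ∂m := hNsq
      _ ≤ _ := by rw [← hintsum]; exact hJS
  -- final: rewrite relEntropies as real numbers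
  have hLHS : relEntropy m r = ((∫ x, llr m r x ∂m : ℝ) : EReal) := by
    rw [relEntropy, if_pos ⟨hmr, hint_mr_m⟩]
  have hP : relEntropy p r = ((∫ x, llr p r x ∂p : ℝ) : EReal) := by
    rw [relEntropy, if_pos hp]
  have hQ : relEntropy q r = ((∫ x, llr q r x ∂q : ℝ) : EReal) := by
    rw [relEntropy, if_pos hq]
  rw [hLHS, hP, hQ, relEnt_ereal_half, ← EReal.coe_mul, ← EReal.coe_mul, ← EReal.coe_mul,
    ← EReal.coe_add, ← EReal.coe_sub]
  rw [EReal.coe_le_coe_iff]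
  rw [hsplit_p, hsplit_q, hint_m_eq]
  nlinarith [hTsq]
end

section
/- Let p, q and r be probability measures on a measurable space with H(p|r) < ∞ and H(q|r) < ∞, and set s = (p+q)/2. Then H(s|r) + (1/2)·H(p|s) + (1/2)·H(q|s) = (1/2)·H(p|r) + (1/2)·H(q|r). -/
open MeasureTheory
open scoped ENNReal NNReal Classical

lemma abs_mul_log_le_two : ∀ t : ℝ, 0 ≤ t → t ≤ 2 → |t * Real.log t| ≤ 2 := by
  intro t h0 h2
  rcases le_or_gt t 1 with h1 | h1
  · rcases eq_or_lt_of_le h0 with h | h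
    · simp [← h]
    · have hl : Real.log t⁻¹ ≤ t⁻¹ - 1 := Real.log_le_sub_one_of_pos (by positivity)
      rw [Real.log_inv] at hl
      have hlt : Real.log t ≤ 0 := Real.log_nonpos h0 h1
      rw [abs_of_nonpos (mul_nonpos_of_nonneg_of_nonpos h0 hlt)]
      have h3 : t * (-Real.log t) ≤ t * (t⁻¹ - 1) := by
        apply mul_le_mul_of_nonneg_left _ h0; linarith
      rw [mul_sub, mul_inv_cancel₀ h.ne'] at h3
      nlinarith
  · have hl : Real.log t ≤ t - 1 := Real.log_le_sub_one_of_pos (by linarith)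
    have h0' : 0 ≤ Real.log t := Real.log_nonneg h1.le
    rw [abs_of_nonneg (by positivity)]
    nlinarith

/-- a.e. chain rule for the log-likelihood ratio. -/
lemma llr_chain {Y : Type*} [MeasurableSpace Y] {p s r : Measure Y}
    [IsFiniteMeasure p] [IsFiniteMeasure s] [IsFiniteMeasure r]
    (hps : p ≪ s) (hsr : s ≪ r) :
    llr p r =ᵐ[p] fun x ↦ llr p s x + llr s r x := by
  have hpr : p ≪ r := hps.trans hsr
  have h1 := hpr.ae_le (Measure.rnDeriv_mul_rnDeriv hps (κ := r))
  filter_upwards [h1, Measure.rnDeriv_pos hps, hps.ae_le (Measure.rnDeriv_lt_top p s),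
    hps.ae_le (Measure.rnDeriv_pos hsr), hpr.ae_le (Measure.rnDeriv_lt_top s r)]
    with x hx hx1 hx2 hx3 hx4
  rw [llr, llr, llr, ← hx, Pi.mul_apply, ENNReal.toReal_mul, Real.log_mul]
  · exact (ENNReal.toReal_pos hx1.ne' hx2.ne).ne'
  · exact (ENNReal.toReal_pos hx3.ne' hx4.ne).ne'

/-- For probability measures `p, q, r` with `H(p|r) < ∞` and `H(q|r) < ∞`, setting
`s = (p+q)/2`, one has `H(s|r) + (1/2)·H(p|s) + (1/2)·H(q|s) = (1/2)·H(p|r) + (1/2)·H(q|r)`. -/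
theorem relEntropy_average_identity {Y : Type*} [MeasurableSpace Y] (p q r : Measure Y)
    [IsProbabilityMeasure p] [IsProbabilityMeasure q] [IsProbabilityMeasure r]
    (hp : relEntropy p r < ⊤) (hq : relEntropy q r < ⊤) :
    relEntropy ((2 : ℝ≥0∞)⁻¹ • (p + q)) r
      + (1/2 : EReal) * relEntropy p ((2 : ℝ≥0∞)⁻¹ • (p + q))
      + (1/2 : EReal) * relEntropy q ((2 : ℝ≥0∞)⁻¹ • (p + q))
    = (1/2 : EReal) * relEntropy p r + (1/2 : EReal) * relEntropy q r := by
  set s : Measure Y := (2 : ℝ≥0∞)⁻¹ • (p + q) with hs_def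
  have hp' : p ≪ r ∧ Integrable (llr p r) p := by
    by_contra h; rw [relEntropy, if_neg h] at hp; exact absurd hp (lt_irrefl _)
  have hq' : q ≪ r ∧ Integrable (llr q r) q := by
    by_contra h; rw [relEntropy, if_neg h] at hq; exact absurd hq (lt_irrefl _)
  obtain ⟨hpr, hintp⟩ := hp'
  obtain ⟨hqr, hintq⟩ := hq'
  haveI : IsProbabilityMeasure s := by
    constructor
    rw [hs_def, Measure.smul_apply, Measure.add_apply, measure_univ, measure_univ, smul_eq_mul]
    norm_num
    exact ENNReal.inv_mul_cancel (by norm_num) (by norm_num)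
  have hps : p ≪ s := by
    intro A hA
    rw [hs_def, Measure.smul_apply, smul_eq_mul] at hA
    rcases mul_eq_zero.mp hA with h | h
    · exact absurd h (by norm_num)
    · rw [Measure.add_apply, add_eq_zero] at h; exact h.1
  have hqs : q ≪ s := by
    intro A hA
    rw [hs_def, Measure.smul_apply, smul_eq_mul] at hA
    rcases mul_eq_zero.mp hA with h | h
    · exact absurd h (by norm_num)
    · rw [Measure.add_apply, add_eq_zero] at h; exact h.2
  have hsr : s ≪ r := by
    rw [hs_def]
    exact (Measure.AbsolutelyContinuous.add_left hpr hqr).smul_left _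
  -- rnDeriv p s ≤ 2 a.e. s, same for q
  have h2s : (2 : ℝ≥0∞) • s = p + q := by
    rw [hs_def, smul_smul, ENNReal.mul_inv_cancel (by norm_num) (by norm_num), one_smul]
  have hsum : ∀ᵐ x ∂s, p.rnDeriv s x + q.rnDeriv s x = 2 := by
    have h1 := Measure.rnDeriv_add p q s
    have h2 : (p + q).rnDeriv s =ᵐ[s] fun _ ↦ (2 : ℝ≥0∞) := by
      rw [← h2s]
      filter_upwards [Measure.rnDeriv_smul_left_of_ne_top s s (r := 2) (by norm_num),
        Measure.rnDeriv_self s] with x hx hx2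
      rw [hx, Pi.smul_apply, hx2, smul_eq_mul, mul_one]
    filter_upwards [h1, h2] with x hx1 hx2
    rw [← hx2, hx1, Pi.add_apply]
  have hple : ∀ᵐ x ∂s, p.rnDeriv s x ≤ 2 := by
    filter_upwards [hsum] with x hx; rw [← hx]; exact le_self_add
  have hqle : ∀ᵐ x ∂s, q.rnDeriv s x ≤ 2 := by
    filter_upwards [hsum] with x hx; rw [← hx]; exact le_add_self
  -- integrability of llr p s w.r.t. p
  have key : ∀ (m : Measure Y), IsProbabilityMeasure m → m ≪ s →
      (∀ᵐ x ∂s, m.rnDeriv s x ≤ 2) → Integrable (llr m s) m := by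
    intro m hm hms hle
    haveI := hm
    rw [← integrable_rnDeriv_smul_iff hms]
    refine Integrable.mono' (integrable_const (2 : ℝ)) ?_ ?_
    · exact ((Measure.measurable_rnDeriv m s).ennreal_toReal.smul
        (measurable_llr m s)).aestronglyMeasurable
    · filter_upwards [hle] with x hx
      have h0 : 0 ≤ (m.rnDeriv s x).toReal := ENNReal.toReal_nonneg
      have h2 : (m.rnDeriv s x).toReal ≤ 2 := by
        rw [show (2 : ℝ) = ((2 : ℝ≥0∞)).toReal by norm_num]
        exact ENNReal.toReal_mono (by norm_num) hx
      rw [smul_eq_mul, Real.norm_eq_abs, llr]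
      exact abs_mul_log_le_two _ h0 h2
  have hintps : Integrable (llr p s) p := key p ‹_› hps hple
  have hintqs : Integrable (llr q s) q := key q ‹_› hqs hqle
  -- chain rules
  have hchp : llr p r =ᵐ[p] fun x ↦ llr p s x + llr s r x := llr_chain hps hsr
  have hchq : llr q r =ᵐ[q] fun x ↦ llr q s x + llr s r x := llr_chain hqs hsr
  -- integrability of llr s r w.r.t. p, q, s
  have hintsp : Integrable (llr s r) p := by
    have : Integrable (fun x ↦ llr p r x - llr p s x) p := hintp.sub hintps
    refine this.congr ?_
    filter_upwards [hchp] with x hx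
    rw [hx]; ring
  have hintsq : Integrable (llr s r) q := by
    have : Integrable (fun x ↦ llr q r x - llr q s x) q := hintq.sub hintqs
    refine this.congr ?_
    filter_upwards [hchq] with x hx
    rw [hx]; ring
  have hintss : Integrable (llr s r) s := by
    rw [hs_def]
    rw [integrable_smul_measure (by norm_num) (by norm_num)]
    exact (integrable_add_measure).mpr ⟨hintsp, hintsq⟩
  -- integral identities
  have hIs : ∫ x, llr s r x ∂s = (2⁻¹ : ℝ) * (∫ x, llr s r x ∂p + ∫ x, llr s r x ∂q) := by
    rw [hs_def, integral_smul_measure, integral_add_measure hintsp hintsq, smul_eq_mul]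
    congr 1
    rw [ENNReal.toReal_inv]
    norm_num
  have hIp : ∫ x, llr p r x ∂p = ∫ x, llr p s x ∂p + ∫ x, llr s r x ∂p := by
    rw [integral_congr_ae hchp, integral_add hintps hintsp]
  have hIq : ∫ x, llr q r x ∂q = ∫ x, llr q s x ∂q + ∫ x, llr s r x ∂q := by
    rw [integral_congr_ae hchq, integral_add hintqs hintsq]
  -- compute the relative entropies
  rw [relEntropy, relEntropy, relEntropy, relEntropy, relEntropy,
    if_pos ⟨hsr, hintss⟩, if_pos ⟨hps, hintps⟩, if_pos ⟨hqs, hintqs⟩,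
    if_pos ⟨hpr, hintp⟩, if_pos ⟨hqr, hintq⟩]
  have h12 : (1/2 : EReal) = ((1/2 : ℝ) : EReal) := by
    rw [one_div, one_div, EReal.coe_inv]; norm_cast
  rw [h12, ← EReal.coe_mul, ← EReal.coe_mul, ← EReal.coe_mul, ← EReal.coe_mul,
    ← EReal.coe_add, ← EReal.coe_add, ← EReal.coe_add]
  norm_cast
  rw [hIs]
  linarith [hIp, hIq]
end

section
/- Let p₁, p₂, r₁, r₂ be probability measures on a measurable space and let t ∈ [0,1]. Then H(t·p₁ + (1−t)·p₂ | t·r₁ + (1−t)·r₂) ≤ t·H(p₁|r₁) + (1−t)·H(p₂|r₂); that is, relative entropy is jointly convex in its two arguments. -/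
open MeasureTheory
open scoped ENNReal NNReal Classical

lemma neg_one_le_mul_log {x : ℝ} (hx : 0 ≤ x) : -1 ≤ x * Real.log x := by
  rcases hx.eq_or_lt with h | h
  · simp [← h]
  · have h1 : Real.log x⁻¹ ≤ x⁻¹ - 1 := Real.log_le_sub_one_of_pos (inv_pos.2 h)
    rw [Real.log_inv] at h1
    have h2 : x * x⁻¹ = 1 := mul_inv_cancel₀ h.ne'
    nlinarith

lemma ptwise {a b c d : ℝ} (ha : 0 ≤ a) (hb : 0 ≤ b) (hc : 0 ≤ c) (hd : 0 ≤ d)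
    (hcd : c + d = 1) (hca : c = 0 → a = 0) (hdb : d = 0 → b = 0) :
    (a + b) * Real.log (a + b) ≤ a * Real.log (a / c) + b * Real.log (b / d) := by
  rcases hc.eq_or_lt with hc0 | hc0
  · have ha0 : a = 0 := hca hc0.symm
    have hd1 : d = 1 := by linarith
    simp [ha0, hd1]
  rcases hd.eq_or_lt with hd0 | hd0
  · have hb0 : b = 0 := hdb hd0.symm
    have hc1 : c = 1 := by linarith
    simp [hb0, hc1]
  · have h1 : c * (a / c) = a := by field_simp
    have h2 : d * (b / d) = b := by field_simp
    have key := Real.convexOn_mul_log.2 (Set.mem_Ici.mpr (div_nonneg ha hc0.le))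
      (Set.mem_Ici.mpr (div_nonneg hb hd0.le)) hc hd hcd
    simp only [smul_eq_mul] at key
    rw [h1, h2, ← mul_assoc, ← mul_assoc, h1, h2] at key
    exact key

lemma coe_mul_relEntropy_ne_bot {Y : Type*} [MeasurableSpace Y] {c : ℝ} (hc : 0 ≤ c)
    (p r : Measure Y) : (c : EReal) * relEntropy p r ≠ ⊥ := by
  rw [relEntropy]
  split_ifs
  · rw [← EReal.coe_mul]; exact EReal.coe_ne_bot _
  · rcases hc.eq_or_lt with h | h
    · rw [← h]; simp
    · rw [EReal.coe_mul_top_of_pos h]; simp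

lemma aux_zero {Y : Type*} [MeasurableSpace Y] {p r s : Measure Y}
    [IsFiniteMeasure p] [IsFiniteMeasure r] [IsFiniteMeasure s]
    (hpr : p ≪ r) (hrs : r ≪ s) :
    ∀ᵐ x ∂s, r.rnDeriv s x = 0 → p.rnDeriv s x = 0 := by
  have hps : p ≪ s := hpr.trans hrs
  have hmeas : MeasurableSet {x | r.rnDeriv s x = 0} :=
    Measure.measurable_rnDeriv r s (measurableSet_singleton 0)
  have hr0 : r {x | r.rnDeriv s x = 0} = 0 := by
    rw [← Measure.setLIntegral_rnDeriv hrs]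
    rw [setLIntegral_congr_fun hmeas (fun x (hx : r.rnDeriv s x = 0) => hx)]
    simp
  have hp0 : p {x | r.rnDeriv s x = 0} = 0 := hpr hr0
  have h := (setLIntegral_eq_zero_iff hmeas (Measure.measurable_rnDeriv p s)).1
    (by rw [Measure.setLIntegral_rnDeriv hps]; exact hp0)
  filter_upwards [h] with x hx using hx

lemma aux_llr {Y : Type*} [MeasurableSpace Y] {p r s : Measure Y}
    [IsFiniteMeasure p] [IsFiniteMeasure r] [IsFiniteMeasure s]
    (hpr : p ≪ r) (hrs : r ≪ s) :
    (fun x => (p.rnDeriv s x).toReal * llr p r x)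
      =ᵐ[s] fun x => (p.rnDeriv s x).toReal *
        Real.log ((p.rnDeriv s x).toReal / (r.rnDeriv s x).toReal) := by
  filter_upwards [Measure.rnDeriv_mul_rnDeriv (κ := s) hpr, aux_zero hpr hrs,
    Measure.rnDeriv_lt_top p s, Measure.rnDeriv_lt_top r s] with x hx h0 hup hvp
  by_cases hv : r.rnDeriv s x = 0
  · simp [h0 hv]
  · have hxv : p.rnDeriv r x * r.rnDeriv s x = p.rnDeriv s x := hx
    have hdt : p.rnDeriv r x ≠ ⊤ := by
      intro h
      rw [h, ENNReal.top_mul hv] at hxv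
      exact hup.ne hxv.symm
    have hvne : (r.rnDeriv s x).toReal ≠ 0 := by
      simp [ENNReal.toReal_eq_zero_iff, hv, hvp.ne]
    have hval : (p.rnDeriv r x).toReal = (p.rnDeriv s x).toReal / (r.rnDeriv s x).toReal := by
      rw [eq_div_iff hvne, ← ENNReal.toReal_mul, hxv]
    simp only [llr_def, hval]

lemma aux_int {Y : Type*} [MeasurableSpace Y] {p r s : Measure Y}
    [IsFiniteMeasure p] [IsFiniteMeasure r] [IsFiniteMeasure s]
    (hpr : p ≪ r) (hrs : r ≪ s) (hint : Integrable (llr p r) p) :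
    Integrable (fun x => (p.rnDeriv s x).toReal *
        Real.log ((p.rnDeriv s x).toReal / (r.rnDeriv s x).toReal)) s ∧
    ∫ x, llr p r x ∂p = ∫ x, (p.rnDeriv s x).toReal *
        Real.log ((p.rnDeriv s x).toReal / (r.rnDeriv s x).toReal) ∂s := by
  have hps : p ≪ s := hpr.trans hrs
  have h2 := aux_llr hpr hrs
  constructor
  · exact Integrable.congr (by simpa [smul_eq_mul] using
      (integrable_rnDeriv_smul_iff (f := llr p r) hps).2 hint) h2
  · rw [← integral_rnDeriv_smul hps (f := llr p r)]
    exact (integral_congr_ae (by simpa [smul_eq_mul] using h2))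

/-- Joint convexity of relative entropy:
`H(t·p₁ + (1−t)·p₂ | t·r₁ + (1−t)·r₂) ≤ t·H(p₁|r₁) + (1−t)·H(p₂|r₂)` for `t ∈ [0,1]`. -/
theorem relEntropy_convex {Y : Type*} [MeasurableSpace Y] (p₁ p₂ r₁ r₂ : Measure Y)
    [IsProbabilityMeasure p₁] [IsProbabilityMeasure p₂]
    [IsProbabilityMeasure r₁] [IsProbabilityMeasure r₂]
    (t : ℝ) (ht0 : 0 ≤ t) (ht1 : t ≤ 1) :
    relEntropy (ENNReal.ofReal t • p₁ + ENNReal.ofReal (1 - t) • p₂)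
               (ENNReal.ofReal t • r₁ + ENNReal.ofReal (1 - t) • r₂)
      ≤ (t : EReal) * relEntropy p₁ r₁ + ((1 - t : ℝ) : EReal) * relEntropy p₂ r₂ := by
  rcases ht0.eq_or_lt with h0 | h0
  · rw [← h0]
    simp
  rcases ht1.eq_or_lt with h1 | h1
  · rw [h1]
    simp
  have ht1' : (0:ℝ) < 1 - t := by linarith
  set T := ENNReal.ofReal t with hTdef
  set T' := ENNReal.ofReal (1 - t) with hT'def
  set q := T • p₁ + T' • p₂ with hqdef
  set s := T • r₁ + T' • r₂ with hsdef
  by_cases hh₁ : p₁ ≪ r₁ ∧ Integrable (llr p₁ r₁) p₁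
  swap
  · rw [show relEntropy p₁ r₁ = ⊤ from by rw [relEntropy, if_neg hh₁],
      EReal.coe_mul_top_of_pos h0,
      EReal.top_add_of_ne_bot (coe_mul_relEntropy_ne_bot ht1'.le _ _)]
    exact le_top
  by_cases hh₂ : p₂ ≪ r₂ ∧ Integrable (llr p₂ r₂) p₂
  swap
  · rw [show relEntropy p₂ r₂ = ⊤ from by rw [relEntropy, if_neg hh₂],
      EReal.coe_mul_top_of_pos ht1',
      EReal.add_top_of_ne_bot (coe_mul_relEntropy_ne_bot h0.le _ _)]
    exact le_top
  obtain ⟨hac₁, hint₁⟩ := hh₁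
  obtain ⟨hac₂, hint₂⟩ := hh₂
  have hTne : T ≠ ⊤ := ENNReal.ofReal_ne_top
  have hT'ne : T' ≠ ⊤ := ENNReal.ofReal_ne_top
  have hT0 : T ≠ 0 := (ENNReal.ofReal_pos.2 h0).ne'
  have hT'0 : T' ≠ 0 := (ENNReal.ofReal_pos.2 ht1').ne'
  haveI : IsFiniteMeasure (T • p₁) :=
    ⟨by rw [Measure.smul_apply, measure_univ, smul_eq_mul, mul_one]; exact hTne.lt_top⟩
  haveI : IsFiniteMeasure (T' • p₂) :=
    ⟨by rw [Measure.smul_apply, measure_univ, smul_eq_mul, mul_one]; exact hT'ne.lt_top⟩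
  haveI : IsFiniteMeasure (T • r₁) :=
    ⟨by rw [Measure.smul_apply, measure_univ, smul_eq_mul, mul_one]; exact hTne.lt_top⟩
  haveI : IsFiniteMeasure (T' • r₂) :=
    ⟨by rw [Measure.smul_apply, measure_univ, smul_eq_mul, mul_one]; exact hT'ne.lt_top⟩
  haveI : IsFiniteMeasure q := by rw [hqdef]; infer_instance
  haveI : IsFiniteMeasure s := by rw [hsdef]; infer_instance
  -- absolute continuity
  have hr₁s : r₁ ≪ s := by
    refine Measure.AbsolutelyContinuous.mk fun A hA h => ?_
    rw [hsdef] at h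
    simp only [Measure.coe_add, Pi.add_apply, Measure.smul_apply, smul_eq_mul, add_eq_zero,
      mul_eq_zero] at h
    rcases h.1 with h' | h'
    · exact absurd h' hT0
    · exact h'
  have hr₂s : r₂ ≪ s := by
    refine Measure.AbsolutelyContinuous.mk fun A hA h => ?_
    rw [hsdef] at h
    simp only [Measure.coe_add, Pi.add_apply, Measure.smul_apply, smul_eq_mul, add_eq_zero,
      mul_eq_zero] at h
    rcases h.2 with h' | h'
    · exact absurd h' hT'0
    · exact h'
  have hp₁s : p₁ ≪ s := hac₁.trans hr₁s
  have hp₂s : p₂ ≪ s := hac₂.trans hr₂s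
  have hqs : q ≪ s := by
    refine Measure.AbsolutelyContinuous.mk fun A hA h => ?_
    rw [hqdef]
    simp only [Measure.coe_add, Pi.add_apply, Measure.smul_apply, smul_eq_mul,
      hp₁s h, hp₂s h, mul_zero, add_zero]
  -- density identities
  have hF1 : q.rnDeriv s =ᵐ[s] fun x => T * p₁.rnDeriv s x + T' * p₂.rnDeriv s x := by
    rw [hqdef]
    filter_upwards [Measure.rnDeriv_add' (T • p₁) (T' • p₂) s,
      Measure.rnDeriv_smul_left_of_ne_top p₁ s hTne,
      Measure.rnDeriv_smul_left_of_ne_top p₂ s hT'ne] with x hx1 hx2 hx3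
    rw [hx1, Pi.add_apply, hx2, hx3]
    simp [smul_eq_mul]
  have hF2 : ∀ᵐ x ∂s, T * r₁.rnDeriv s x + T' * r₂.rnDeriv s x = 1 := by
    have h1 := Measure.rnDeriv_add' (T • r₁) (T' • r₂) s
    rw [← hsdef] at h1
    filter_upwards [Measure.rnDeriv_self s, h1,
      Measure.rnDeriv_smul_left_of_ne_top r₁ s hTne,
      Measure.rnDeriv_smul_left_of_ne_top r₂ s hT'ne] with x hx0 hx1 hx2 hx3
    calc T * r₁.rnDeriv s x + T' * r₂.rnDeriv s x
        = (T • r₁).rnDeriv s x + (T' • r₂).rnDeriv s x := by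
          rw [hx2, hx3]; simp [smul_eq_mul]
      _ = s.rnDeriv s x := (hx1.trans (Pi.add_apply _ _ x)).symm
      _ = 1 := hx0
  -- pointwise inequality
  have hptw : ∀ᵐ x ∂s,
      (q.rnDeriv s x).toReal * Real.log ((q.rnDeriv s x).toReal)
        ≤ t * ((p₁.rnDeriv s x).toReal *
            Real.log ((p₁.rnDeriv s x).toReal / (r₁.rnDeriv s x).toReal))
          + (1 - t) * ((p₂.rnDeriv s x).toReal *
            Real.log ((p₂.rnDeriv s x).toReal / (r₂.rnDeriv s x).toReal)) := by
    filter_upwards [hF1, hF2, Measure.rnDeriv_lt_top p₁ s, Measure.rnDeriv_lt_top p₂ s,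
      Measure.rnDeriv_lt_top r₁ s, Measure.rnDeriv_lt_top r₂ s,
      aux_zero hac₁ hr₁s, aux_zero hac₂ hr₂s] with x hx1 hx2 hu1 hu2 hv1 hv2 hz1 hz2
    have hWa : (q.rnDeriv s x).toReal
        = t * (p₁.rnDeriv s x).toReal + (1 - t) * (p₂.rnDeriv s x).toReal := by
      rw [hx1, ENNReal.toReal_add (ENNReal.mul_ne_top hTne hu1.ne)
        (ENNReal.mul_ne_top hT'ne hu2.ne), ENNReal.toReal_mul, ENNReal.toReal_mul,
        hTdef, hT'def, ENNReal.toReal_ofReal ht0, ENNReal.toReal_ofReal ht1'.le]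
    have hcd : t * (r₁.rnDeriv s x).toReal + (1 - t) * (r₂.rnDeriv s x).toReal = 1 := by
      have h := congrArg ENNReal.toReal hx2
      rwa [ENNReal.toReal_add (ENNReal.mul_ne_top hTne hv1.ne)
        (ENNReal.mul_ne_top hT'ne hv2.ne), ENNReal.toReal_mul, ENNReal.toReal_mul,
        hTdef, hT'def, ENNReal.toReal_ofReal ht0, ENNReal.toReal_ofReal ht1'.le,
        ENNReal.toReal_one] at h
    have hca : t * (r₁.rnDeriv s x).toReal = 0 → t * (p₁.rnDeriv s x).toReal = 0 := by
      intro h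
      rcases mul_eq_zero.1 h with h' | h'
      · exact absurd h' h0.ne'
      · have : r₁.rnDeriv s x = 0 := by
          rcases ENNReal.toReal_eq_zero_iff _ |>.1 h' with h'' | h''
          · exact h''
          · exact absurd h'' hv1.ne
        rw [hz1 this]
        simp
    have hdb : (1 - t) * (r₂.rnDeriv s x).toReal = 0 → (1 - t) * (p₂.rnDeriv s x).toReal = 0 := by
      intro h
      rcases mul_eq_zero.1 h with h' | h'
      · exact absurd h' ht1'.ne'
      · have : r₂.rnDeriv s x = 0 := by
          rcases ENNReal.toReal_eq_zero_iff _ |>.1 h' with h'' | h''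
          · exact h''
          · exact absurd h'' hv2.ne
        rw [hz2 this]
        simp
    have key := ptwise (mul_nonneg h0.le ENNReal.toReal_nonneg)
      (mul_nonneg ht1'.le ENNReal.toReal_nonneg)
      (mul_nonneg h0.le ENNReal.toReal_nonneg)
      (mul_nonneg ht1'.le ENNReal.toReal_nonneg) hcd hca hdb
    rw [mul_div_mul_left _ _ h0.ne', mul_div_mul_left _ _ ht1'.ne'] at key
    rw [hWa]
    refine le_trans key (le_of_eq ?_)
    ring
  -- integrability and integral identities
  obtain ⟨hintφ₁, hIeq₁⟩ := aux_int hac₁ hr₁s hint₁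
  obtain ⟨hintφ₂, hIeq₂⟩ := aux_int hac₂ hr₂s hint₂
  have hψmeas : AEStronglyMeasurable
      (fun x => (q.rnDeriv s x).toReal * Real.log ((q.rnDeriv s x).toReal)) s :=
    ((Measure.measurable_rnDeriv q s).ennreal_toReal.mul
      (Real.measurable_log.comp (Measure.measurable_rnDeriv q s).ennreal_toReal)).aestronglyMeasurable
  have hg : Integrable (fun x => |t * ((p₁.rnDeriv s x).toReal *
      Real.log ((p₁.rnDeriv s x).toReal / (r₁.rnDeriv s x).toReal))
      + (1 - t) * ((p₂.rnDeriv s x).toReal *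
      Real.log ((p₂.rnDeriv s x).toReal / (r₂.rnDeriv s x).toReal))| + 1) s :=
    (((hintφ₁.const_mul t).add (hintφ₂.const_mul (1 - t))).abs).add (integrable_const 1)
  have hψint : Integrable
      (fun x => (q.rnDeriv s x).toReal * Real.log ((q.rnDeriv s x).toReal)) s := by
    refine hg.mono' hψmeas ?_
    filter_upwards [hptw] with x hx
    rw [Real.norm_eq_abs, abs_le]
    have hlb := neg_one_le_mul_log (ENNReal.toReal_nonneg (a := q.rnDeriv s x))
    constructor
    · have := abs_nonneg (t * ((p₁.rnDeriv s x).toReal *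
        Real.log ((p₁.rnDeriv s x).toReal / (r₁.rnDeriv s x).toReal))
        + (1 - t) * ((p₂.rnDeriv s x).toReal *
        Real.log ((p₂.rnDeriv s x).toReal / (r₂.rnDeriv s x).toReal)))
      linarith
    · have := le_abs_self (t * ((p₁.rnDeriv s x).toReal *
        Real.log ((p₁.rnDeriv s x).toReal / (r₁.rnDeriv s x).toReal))
        + (1 - t) * ((p₂.rnDeriv s x).toReal *
        Real.log ((p₂.rnDeriv s x).toReal / (r₂.rnDeriv s x).toReal)))
      linarith
  have hintllr : Integrable (llr q s) q :=
    (integrable_rnDeriv_smul_iff hqs).1 (by simpa [llr_def, smul_eq_mul] using hψint)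
  have hIq : ∫ x, llr q s x ∂q
      = ∫ x, (q.rnDeriv s x).toReal * Real.log ((q.rnDeriv s x).toReal) ∂s := by
    rw [← integral_rnDeriv_smul hqs (f := llr q s)]
    refine integral_congr_ae (ae_of_all _ fun x => ?_)
    simp [llr_def, smul_eq_mul]
  have hle : ∫ x, llr q s x ∂q
      ≤ t * ∫ x, llr p₁ r₁ x ∂p₁ + (1 - t) * ∫ x, llr p₂ r₂ x ∂p₂ := by
    rw [hIq, hIeq₁, hIeq₂, ← integral_const_mul, ← integral_const_mul,
      ← integral_add (hintφ₁.const_mul t) (hintφ₂.const_mul (1 - t))]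
    exact integral_mono_ae hψint ((hintφ₁.const_mul t).add (hintφ₂.const_mul (1 - t))) hptw
  rw [relEntropy, if_pos ⟨hqs, hintllr⟩, relEntropy, if_pos ⟨hac₁, hint₁⟩,
    relEntropy, if_pos ⟨hac₂, hint₂⟩, ← EReal.coe_mul, ← EReal.coe_mul, ← EReal.coe_add]
  exact_mod_cast hle
end

section
/- Let n ≥ 1 and u, v ∈ ℝⁿ. Define f(α, β) = Σᵢ αᵢ·log(αᵢ/βᵢ) for α, β ∈ [0,∞)ⁿ (with the conventions 0·log(0/b) = 0 for b ≥ 0 and a·log(a/0) = +∞ for a > 0). Then the convex conjugate sup{⟨u,α⟩ + ⟨v,β⟩ − f(α,β) : α, β ∈ [0,∞)ⁿ} equals 0 if vᵢ ≤ −exp(uᵢ − 1) for every i, and equals +∞ otherwise. -/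
open scoped ENNReal NNReal Classical BigOperators

/-- The entropy-type term `a·log(a/b)` for `a, b ≥ 0`, with the conventions
`0·log(0/b) = 0` for `b ≥ 0` and `a·log(a/0) = +∞` for `a > 0`. -/
noncomputable def entTerm (a b : ℝ≥0) : EReal :=
  if a = 0 then 0 else if b = 0 then ⊤ else (((a : ℝ) * Real.log ((a : ℝ) / (b : ℝ)) : ℝ) : EReal)

lemma entTerm_ne_bot (a b : ℝ≥0) : entTerm a b ≠ ⊥ := by
  unfold entTerm
  split_ifs with h1 h2
  · simp
  · simp
  · exact EReal.coe_ne_bot _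

lemma EReal.coe_sum' {ι : Type*} (s : Finset ι) (f : ι → ℝ) :
    ((∑ i ∈ s, f i : ℝ) : EReal) = ∑ i ∈ s, (f i : EReal) := by
  induction s using Finset.cons_induction with
  | empty => simp
  | cons i s hi ih => rw [Finset.sum_cons, Finset.sum_cons, EReal.coe_add, ih]

lemma EReal.sum_ne_bot {ι : Type*} (s : Finset ι) (f : ι → EReal)
    (h : ∀ i ∈ s, f i ≠ ⊥) : ∑ i ∈ s, f i ≠ ⊥ := by
  induction s using Finset.cons_induction with
  | empty => simp
  | cons i s hi ih =>
    rw [Finset.sum_cons]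
    intro hc
    rcases EReal.add_eq_bot_iff.1 hc with h1 | h1
    · exact h i (Finset.mem_cons_self i s) h1
    · exact ih (fun j hj => h j (Finset.mem_cons_of_mem hj)) h1

lemma EReal.sum_eq_top {ι : Type*} (s : Finset ι) (f : ι → EReal)
    (hb : ∀ i ∈ s, f i ≠ ⊥) (i0 : ι) (hi0 : i0 ∈ s) (ht : f i0 = ⊤) :
    ∑ i ∈ s, f i = ⊤ := by
  rw [← Finset.add_sum_erase s f hi0, ht]
  exact EReal.top_add_of_ne_bot
    (EReal.sum_ne_bot _ _ (fun j hj => hb j (Finset.mem_of_mem_erase hj)))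

/-- key real inequality -/
lemma key1 (u v a b : ℝ) (hv : v ≤ -Real.exp (u - 1)) (ha : 0 ≤ a) (hb : 0 ≤ b)
    (hab : a = 0 ∨ b ≠ 0) : u * a + v * b ≤ a * Real.log (a / b) := by
  have hvneg : v < 0 := lt_of_le_of_lt hv (neg_lt_zero.mpr (Real.exp_pos _))
  rcases eq_or_lt_of_le ha with h0 | hapos
  · simp [← h0]
    nlinarith
  · have hbpos : 0 < b := by
      rcases hab with h | h
      · exact absurd h hapos.ne'
      · exact lt_of_le_of_ne hb (Ne.symm h)
    have hnv : 0 < -v := neg_pos.2 hvneg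
    have hlognv : u - 1 ≤ Real.log (-v) := by
      have := Real.log_le_log (Real.exp_pos _) (by linarith : Real.exp (u-1) ≤ -v)
      rwa [Real.log_exp] at this
    -- log ((-v)*b/a) ≤ (-v)*b/a - 1
    have hx : 0 < (-v) * b / a := by positivity
    have h1 : Real.log ((-v) * b / a) ≤ (-v) * b / a - 1 :=
      Real.log_le_sub_one_of_pos hx
    have h2 : Real.log ((-v) * b / a) = Real.log (-v) - Real.log (a / b) := by
      rw [Real.log_div (by positivity) hapos.ne', Real.log_mul hnv.ne' hbpos.ne',
        Real.log_div hapos.ne' hbpos.ne']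
      ring
    rw [h2] at h1
    have h3 := mul_le_mul_of_nonneg_left h1 ha
    have heq : a * ((-v) * b / a - 1) = (-v) * b - a := by
      field_simp
    nlinarith [mul_le_mul_of_nonneg_left hlognv ha]


lemma witness_value (n : ℕ) (u v : Fin n → ℝ) (i0 : Fin n) (a b : ℝ)
    (ha : 0 < a) (hb : 0 < b) :
    ((((∑ i, u i * (((fun j => if j = i0 then a.toNNReal else 0) i : ℝ≥0) : ℝ))
        + ∑ i, v i * (((fun j => if j = i0 then b.toNNReal else 0) i : ℝ≥0) : ℝ) : ℝ) : EReal)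
      - ∑ i, entTerm ((fun j => if j = i0 then a.toNNReal else 0) i)
          ((fun j => if j = i0 then b.toNNReal else 0) i))
    = ((u i0 * a + v i0 * b - a * Real.log (a / b) : ℝ) : EReal) := by
  have hca : (a.toNNReal : ℝ) = a := Real.coe_toNNReal a ha.le
  have hcb : (b.toNNReal : ℝ) = b := Real.coe_toNNReal b hb.le
  have h1 : ∑ i, u i * (((fun j => if j = i0 then a.toNNReal else 0) i : ℝ≥0) : ℝ) = u i0 * a := by
    rw [Finset.sum_eq_single i0]
    · simp [hca]
    · intro j _ hj; simp [hj]
    · intro h; exact absurd (Finset.mem_univ i0) h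
  have h2 : ∑ i, v i * (((fun j => if j = i0 then b.toNNReal else 0) i : ℝ≥0) : ℝ) = v i0 * b := by
    rw [Finset.sum_eq_single i0]
    · simp [hcb]
    · intro j _ hj; simp [hj]
    · intro h; exact absurd (Finset.mem_univ i0) h
  have h3 : ∑ i, entTerm ((fun j => if j = i0 then a.toNNReal else 0) i)
      ((fun j => if j = i0 then b.toNNReal else 0) i)
      = ((a * Real.log (a / b) : ℝ) : EReal) := by
    rw [Finset.sum_eq_single i0]
    · have hna : a.toNNReal ≠ 0 := by simp [Real.toNNReal_eq_zero, not_le, ha]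
      have hnb : b.toNNReal ≠ 0 := by simp [Real.toNNReal_eq_zero, not_le, hb]
      show entTerm (if i0 = i0 then a.toNNReal else 0) (if i0 = i0 then b.toNNReal else 0) = _
      rw [if_pos rfl, if_pos rfl]
      unfold entTerm
      rw [if_neg hna, if_neg hnb, hca, hcb]
    · intro j _ hj; simp [hj, entTerm]
    · intro h; exact absurd (Finset.mem_univ i0) h
  rw [h1, h2, h3, ← EReal.coe_sub]

/-- With `f(α, β) = Σᵢ αᵢ·log(αᵢ/βᵢ)` on `[0,∞)ⁿ × [0,∞)ⁿ`, the convex conjugate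
`sup {⟨u,α⟩ + ⟨v,β⟩ − f(α,β)}` equals `0` if `vᵢ ≤ −exp(uᵢ − 1)` for every `i`,
and `+∞` otherwise. -/
theorem entTerm_conjugate (n : ℕ) (hn : 1 ≤ n) (u v : Fin n → ℝ) :
    (⨆ (α : Fin n → ℝ≥0) (β : Fin n → ℝ≥0),
        ((((∑ i, u i * (α i : ℝ)) + ∑ i, v i * (β i : ℝ) : ℝ) : EReal)
          - ∑ i, entTerm (α i) (β i)))
    = if ∀ i, v i ≤ -Real.exp (u i - 1) then 0 else ⊤ := by
  split_ifs with hcase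
  · -- sup = 0
    apply le_antisymm
    · apply iSup_le; intro α; apply iSup_le; intro β
      by_cases htop : ∃ i, α i ≠ 0 ∧ β i = 0
      · obtain ⟨i0, hα, hβ⟩ := htop
        have : ∑ i, entTerm (α i) (β i) = ⊤ :=
          EReal.sum_eq_top _ _ (fun j _ => entTerm_ne_bot _ _) i0 (Finset.mem_univ _)
            (by simp [entTerm, hα, hβ])
        rw [this, EReal.sub_top]
        exact bot_le
      · push_neg at htop
        have hent : ∀ i, entTerm (α i) (β i)
            = (((α i : ℝ) * Real.log ((α i : ℝ) / (β i : ℝ)) : ℝ) : EReal) := by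
          intro i
          unfold entTerm
          rcases eq_or_ne (α i) 0 with h | h
          · simp [h]
          · simp [h, htop i h]
        have hsum : ∑ i, entTerm (α i) (β i)
            = ((∑ i, (α i : ℝ) * Real.log ((α i : ℝ) / (β i : ℝ)) : ℝ) : EReal) := by
          rw [EReal.coe_sum']; exact Finset.sum_congr rfl (fun i _ => hent i)
        rw [hsum, ← EReal.coe_sub, ← EReal.coe_zero, EReal.coe_le_coe_iff]
        rw [sub_nonpos, ← Finset.sum_add_distrib]
        apply Finset.sum_le_sum
        intro i _
        apply key1 _ _ _ _ (hcase i) (α i).coe_nonneg (β i).coe_nonneg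
        rcases eq_or_ne (α i) 0 with h | h
        · left; simp [h]
        · right; exact NNReal.coe_ne_zero.2 (htop i h)
    · -- value at 0,0 is 0
      have : ((((∑ i, u i * ((0:ℝ≥0) : ℝ)) + ∑ i, v i * ((0:ℝ≥0) : ℝ) : ℝ) : EReal)
          - ∑ i : Fin n, entTerm 0 0) = 0 := by
        simp [entTerm]
      calc (0:EReal) = _ := this.symm
        _ ≤ _ := le_iSup₂ (f := fun (α β : Fin n → ℝ≥0) =>
            ((((∑ i, u i * (α i : ℝ)) + ∑ i, v i * (β i : ℝ) : ℝ) : EReal)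
              - ∑ i, entTerm (α i) (β i))) (fun _ => 0) (fun _ => 0)
  · -- sup = ⊤
    push_neg at hcase
    obtain ⟨i0, hv0⟩ := hcase
    rw [EReal.eq_top_iff_forall_lt]
    intro M
    have key : ∃ a b : ℝ, 0 < a ∧ 0 < b ∧
        M < u i0 * a + v i0 * b - a * Real.log (a / b) := by
      rcases lt_or_ge (v i0) 0 with hv | hv
      · -- v < 0 case
        have hnv : 0 < -v i0 := neg_pos.2 hv
        have hlog : Real.log (-v i0) < u i0 - 1 := by
          have h1 : -v i0 < Real.exp (u i0 - 1) := by linarith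
          calc Real.log (-v i0) < Real.log (Real.exp (u i0 - 1)) :=
                Real.log_lt_log hnv h1
            _ = u i0 - 1 := Real.log_exp _
        set c := u i0 - 1 - Real.log (-v i0) with hc
        have hcpos : 0 < c := by rw [hc]; linarith
        refine ⟨(|M| + 1) / c, (|M| + 1) / c / (-v i0), by positivity, by positivity, ?_⟩
        set a := (|M| + 1) / c with hadef
        have hapos : 0 < a := by positivity
        have hab : a / (a / (-v i0)) = -v i0 := by
          field_simp
        rw [hab]
        have hvb : v i0 * (a / (-v i0)) = -a := by
          rw [mul_div_assoc', div_neg, mul_div_cancel_left₀ _ hv.ne]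
        have hval : u i0 * a + v i0 * (a / (-v i0)) - a * Real.log (-v i0) = a * c := by
          rw [hvb, hc]; ring
        rw [hval, hadef, div_mul_cancel₀ _ hcpos.ne']
        calc M ≤ |M| := le_abs_self M
          _ < |M| + 1 := by linarith
      · -- v ≥ 0 case
        refine ⟨1, Real.exp (M + 1 - u i0), one_pos, Real.exp_pos _, ?_⟩
        have hlog : Real.log (1 / Real.exp (M + 1 - u i0)) = -(M + 1 - u i0) := by
          rw [one_div, Real.log_inv, Real.log_exp]
        rw [hlog]
        have : 0 ≤ v i0 * Real.exp (M + 1 - u i0) :=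
          mul_nonneg hv (Real.exp_pos _).le
        linarith
    obtain ⟨a, b, ha, hb, hM⟩ := key
    calc (M : EReal) < ((u i0 * a + v i0 * b - a * Real.log (a / b) : ℝ) : EReal) := by
          exact_mod_cast hM
      _ = _ := (witness_value n u v i0 a b ha hb).symm
      _ ≤ _ := le_iSup₂ (f := fun (α β : Fin n → ℝ≥0) =>
            ((((∑ i, u i * (α i : ℝ)) + ∑ i, v i * (β i : ℝ) : ℝ) : EReal)
              - ∑ i, entTerm (α i) (β i)))
            (fun j => if j = i0 then a.toNNReal else 0)
            (fun j => if j = i0 then b.toNNReal else 0)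
end

section
/- Let n ≥ 1 and u, v ∈ ℝⁿ. Then the convex conjugate sup{⟨u,α⟩ + ⟨v,β⟩ − KL(α|β) : α, β ∈ [0,∞)ⁿ} equals 0 if vᵢ ≤ 1 − exp(uᵢ) for every i, and equals +∞ otherwise. -/
open scoped ENNReal NNReal Classical BigOperators

/-- The generalized Kullback–Leibler term `a·log(a/b) − a + b` for `a, b ≥ 0`, with the
conventions `0·log(0/b) = 0` for `b ≥ 0` and `a·log(a/0) = +∞` for `a > 0`. -/
noncomputable def klTerm (a b : ℝ≥0) : EReal :=
  if a = 0 then ((b : ℝ) : EReal)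
  else if b = 0 then ⊤
  else (((a : ℝ) * Real.log ((a : ℝ) / (b : ℝ)) - (a : ℝ) + (b : ℝ) : ℝ) : EReal)

lemma ereal_coe_sum {ι : Type*} (s : Finset ι) (f : ι → ℝ) :
    ((∑ i ∈ s, f i : ℝ) : EReal) = ∑ i ∈ s, ((f i : ℝ) : EReal) := by
  classical
  induction s using Finset.induction with
  | empty => simp
  | insert _ _ h ih => simp [Finset.sum_insert h, ih]

/-- key real inequality -/
lemma key_real (u v a b : ℝ) (hv : v ≤ 1 - Real.exp u) (ha : 0 < a) (hb : 0 < b) :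
    u * a + v * b ≤ a * Real.log (a / b) - a + b := by
  have h1 : Real.log (b * Real.exp u / a) ≤ b * Real.exp u / a - 1 :=
    Real.log_le_sub_one_of_pos (by positivity)
  have hlog : Real.log (b * Real.exp u / a) = Real.log b + u - Real.log a := by
    rw [Real.log_div (by positivity) (ne_of_gt ha), Real.log_mul (ne_of_gt hb)
      (Real.exp_ne_zero u), Real.log_exp]
  have h2 : a * (Real.log b + u - Real.log a) ≤ b * Real.exp u - a := by
    have := mul_le_mul_of_nonneg_left h1 ha.le
    rw [hlog] at this
    calc a * (Real.log b + u - Real.log a) ≤ a * (b * Real.exp u / a - 1) := this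
      _ = b * Real.exp u - a := by field_simp
  have hvb : v * b ≤ (1 - Real.exp u) * b := mul_le_mul_of_nonneg_right hv hb.le
  have hlab : Real.log (a / b) = Real.log a - Real.log b :=
    Real.log_div (ne_of_gt ha) (ne_of_gt hb)
  nlinarith [h2, hvb]

lemma klTerm_ge (u v : ℝ) (hv : v ≤ 1 - Real.exp u) (a b : ℝ≥0) :
    ((u * (a : ℝ) + v * (b : ℝ) : ℝ) : EReal) ≤ klTerm a b := by
  unfold klTerm
  by_cases ha : a = 0
  · simp only [ha, if_pos]
    rw [EReal.coe_le_coe_iff]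
    have : Real.exp u > 0 := Real.exp_pos u
    have hb : (0:ℝ) ≤ b := b.coe_nonneg
    simp only [NNReal.coe_zero, mul_zero, zero_add]
    nlinarith [mul_le_mul_of_nonneg_right hv hb]
  · rw [if_neg ha]
    by_cases hb : b = 0
    · simp [hb]
    · rw [if_neg hb, EReal.coe_le_coe_iff]
      exact key_real u v a b hv (NNReal.coe_pos.mpr (pos_iff_ne_zero.mpr ha))
        (NNReal.coe_pos.mpr (pos_iff_ne_zero.mpr hb))

lemma klTerm_nonneg (a b : ℝ≥0) : (0 : EReal) ≤ klTerm a b := by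
  unfold klTerm
  by_cases ha : a = 0
  · simp [ha, EReal.coe_nonneg, b.coe_nonneg]
  · rw [if_neg ha]
    by_cases hb : b = 0
    · simp [hb]
    · rw [if_neg hb]
      have ha' : (0:ℝ) < a := NNReal.coe_pos.mpr (pos_iff_ne_zero.mpr ha)
      have hb' : (0:ℝ) < b := NNReal.coe_pos.mpr (pos_iff_ne_zero.mpr hb)
      have := Real.log_le_sub_one_of_pos (show (0:ℝ) < b / a by positivity)
      have hlog : Real.log (b / a) = Real.log b - Real.log a :=
        Real.log_div (ne_of_gt hb') (ne_of_gt ha')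
      have hlog2 : Real.log ((a:ℝ) / b) = Real.log a - Real.log b :=
        Real.log_div (ne_of_gt ha') (ne_of_gt hb')
      have : (0:ℝ) ≤ (a:ℝ) * Real.log ((a:ℝ) / (b:ℝ)) - a + b := by
        rw [hlog2]
        have h3 : (a:ℝ) * ((b:ℝ) / (a:ℝ)) = b := by field_simp
        nlinarith [mul_le_mul_of_nonneg_left this ha'.le]
      exact_mod_cast this

/-- With `KL(α|β) = Σᵢ (αᵢ·log(αᵢ/βᵢ) − αᵢ + βᵢ)` on `[0,∞)ⁿ × [0,∞)ⁿ`, the convex conjugate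
`sup {⟨u,α⟩ + ⟨v,β⟩ − KL(α|β)}` equals `0` if `vᵢ ≤ 1 − exp(uᵢ)` for every `i`,
and `+∞` otherwise. -/
theorem klTerm_conjugate (n : ℕ) (hn : 1 ≤ n) (u v : Fin n → ℝ) :
    (⨆ (α : Fin n → ℝ≥0) (β : Fin n → ℝ≥0),
        ((((∑ i, u i * (α i : ℝ)) + ∑ i, v i * (β i : ℝ) : ℝ) : EReal)
          - ∑ i, klTerm (α i) (β i)))
    = if ∀ i, v i ≤ 1 - Real.exp (u i) then 0 else ⊤ := by
  have hzero : ∀ (w : Fin n → ℝ),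
      (∑ i, w i * ((0 : Fin n → ℝ≥0) i : ℝ)) = 0 := by intro w; simp
  have hval0 : ((((∑ i, u i * ((0 : Fin n → ℝ≥0) i : ℝ)) +
        ∑ i, v i * ((0 : Fin n → ℝ≥0) i : ℝ) : ℝ) : EReal)
        - ∑ i, klTerm ((0 : Fin n → ℝ≥0) i) ((0 : Fin n → ℝ≥0) i)) = 0 := by
    simp [klTerm]
  split_ifs with h
  · apply le_antisymm
    · apply iSup_le; intro α; apply iSup_le; intro β
      have hle : (((∑ i, u i * (α i : ℝ)) + ∑ i, v i * (β i : ℝ) : ℝ) : EReal)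
          ≤ ∑ i, klTerm (α i) (β i) := by
        calc (((∑ i, u i * (α i : ℝ)) + ∑ i, v i * (β i : ℝ) : ℝ) : EReal)
            = ((∑ i, (u i * (α i : ℝ) + v i * (β i : ℝ)) : ℝ) : EReal) := by
              rw [← Finset.sum_add_distrib]
          _ = ∑ i, ((u i * (α i : ℝ) + v i * (β i : ℝ) : ℝ) : EReal) :=
              ereal_coe_sum _ _
          _ ≤ ∑ i, klTerm (α i) (β i) :=
              Finset.sum_le_sum (fun i _ => klTerm_ge (u i) (v i) (h i) (α i) (β i))
      calc _ ≤ (((∑ i, u i * (α i : ℝ)) + ∑ i, v i * (β i : ℝ) : ℝ) : EReal)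
            - (((∑ i, u i * (α i : ℝ)) + ∑ i, v i * (β i : ℝ) : ℝ) : EReal) :=
          EReal.sub_le_sub (le_refl _) hle
        _ = 0 := by rw [← EReal.coe_sub, sub_self, EReal.coe_zero]
    · rw [← hval0]
      exact le_iSup_of_le 0 (le_iSup_of_le 0 (le_refl _))
  · push_neg at h
    obtain ⟨i, hi⟩ := h
    set c : ℝ := v i - (1 - Real.exp (u i)) with hc
    have hcpos : 0 < c := by simp [hc]; linarith
    rw [eq_top_iff]
    apply le_of_forall_lt
    intro x hx
    have hlb0 : (0 : EReal) ≤ (⨆ (α : Fin n → ℝ≥0) (β : Fin n → ℝ≥0),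
        ((((∑ i, u i * (α i : ℝ)) + ∑ i, v i * (β i : ℝ) : ℝ) : EReal)
          - ∑ i, klTerm (α i) (β i))) := by
      rw [← hval0]; exact le_iSup_of_le 0 (le_iSup_of_le 0 (le_refl _))
    induction x using EReal.rec with
    | bot => exact lt_of_lt_of_le (bot_lt_iff_ne_bot.mpr (by simp)) hlb0
    | top => exact absurd hx (lt_irrefl _)
    | coe r =>
      -- choose M with c * M > r
      set M : ℝ := (|r| + 1) / c with hM
      have hMpos : 0 < M := by positivity
      have hcM : r < c * M := by
        have : c * M = |r| + 1 := by rw [hM]; field_simp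
        rw [this]
        have := abs_nonneg r
        cases' abs_cases r with h1 h1 <;> linarith
      set a0 : ℝ≥0 := ⟨M * Real.exp (u i), by positivity⟩ with ha0
      set b0 : ℝ≥0 := ⟨M, hMpos.le⟩ with hb0
      set α : Fin n → ℝ≥0 := fun j => if j = i then a0 else 0 with hα
      set β : Fin n → ℝ≥0 := fun j => if j = i then b0 else 0 with hβ
      have ha0ne : a0 ≠ 0 := by
        intro hcon
        have : M * Real.exp (u i) = 0 := congrArg NNReal.toReal hcon
        nlinarith [Real.exp_pos (u i)]
      have hb0ne : b0 ≠ 0 := by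
        intro hcon
        have : M = 0 := congrArg NNReal.toReal hcon
        linarith
      have hsum1 : (∑ j, u j * (α j : ℝ)) = u i * (M * Real.exp (u i)) := by
        rw [hα]
        rw [Finset.sum_eq_single i]
        · simp [ha0]; exact Or.inl rfl
        · intro j _ hj; simp [hj]
        · simp
      have hsum2 : (∑ j, v j * (β j : ℝ)) = v i * M := by
        rw [hβ]
        rw [Finset.sum_eq_single i]
        · simp [hb0]; exact Or.inl rfl
        · intro j _ hj; simp [hj]
        · simp
      have hkl : (∑ j, klTerm (α j) (β j))
          = ((M * Real.exp (u i) * u i - M * Real.exp (u i) + M : ℝ) : EReal) := by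
        rw [Finset.sum_eq_single i]
        · simp only [hα, hβ, if_pos rfl]
          unfold klTerm
          rw [if_neg ha0ne, if_neg hb0ne]
          congr 1
          have h1 : (a0 : ℝ) = M * Real.exp (u i) := rfl
          have h2 : (b0 : ℝ) = M := rfl
          rw [h1, h2]
          have : M * Real.exp (u i) / M = Real.exp (u i) := by field_simp
          rw [this, Real.log_exp]
        · intro j _ hj; simp [hα, hβ, hj, klTerm]
        · simp
      have hval : ((((∑ j, u j * (α j : ℝ)) + ∑ j, v j * (β j : ℝ) : ℝ) : EReal)
          - ∑ j, klTerm (α j) (β j)) = ((c * M : ℝ) : EReal) := by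
        rw [hsum1, hsum2, hkl, ← EReal.coe_sub]
        congr 1
        rw [hc]; ring
      calc (r : EReal) < ((c * M : ℝ) : EReal) := by exact_mod_cast hcM
        _ = ((((∑ j, u j * (α j : ℝ)) + ∑ j, v j * (β j : ℝ) : ℝ) : EReal)
          - ∑ j, klTerm (α j) (β j)) := hval.symm
        _ ≤ ⨆ (β' : Fin n → ℝ≥0),
            ((((∑ j, u j * (α j : ℝ)) + ∑ j, v j * (β' j : ℝ) : ℝ) : EReal)
              - ∑ j, klTerm (α j) (β' j)) := le_iSup (fun β' : Fin n → ℝ≥0 =>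
                ((((∑ j, u j * (α j : ℝ)) + ∑ j, v j * (β' j : ℝ) : ℝ) : EReal)
                  - ∑ j, klTerm (α j) (β' j))) β
        _ ≤ _ := le_iSup (fun α' : Fin n → ℝ≥0 => ⨆ (β' : Fin n → ℝ≥0),
            ((((∑ j, u j * (α' j : ℝ)) + ∑ j, v j * (β' j : ℝ) : ℝ) : EReal)
              - ∑ j, klTerm (α' j) (β' j))) α
end

section
/- Let n ≥ 1, κ > 0, g ∈ (0,∞)ⁿ, and u, v ∈ ℝⁿ. Define G(α, β) = κ·KL(β | g⊙α) for α, β ∈ [0,∞)ⁿ, where (g⊙α)ᵢ = gᵢ·αᵢ. Then sup{⟨u,α⟩ + ⟨v,β⟩ − G(α,β) : α, β ∈ [0,∞)ⁿ} equals 0 if uᵢ ≤ κ·gᵢ·(1 − exp(vᵢ/κ)) for every i, and equals +∞ otherwise. -/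
open scoped ENNReal NNReal Classical BigOperators

noncomputable def klReal (a b : ℝ≥0) : ℝ :=
  if a = 0 then (b : ℝ)
  else (a : ℝ) * Real.log ((a : ℝ) / (b : ℝ)) - (a : ℝ) + (b : ℝ)

lemma klTerm_eq_coe {a b : ℝ≥0} (h : a = 0 ∨ b ≠ 0) :
    klTerm a b = ((klReal a b : ℝ) : EReal) := by
  rcases h with h | h
  · simp [klTerm, klReal, h]
  · by_cases ha : a = 0 <;> simp [klTerm, klReal, ha, h] <;> push_cast <;> ring

lemma klTerm_eq_top {a b : ℝ≥0} (ha : a ≠ 0) (hb : b = 0) : klTerm a b = ⊤ := by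
  simp [klTerm, ha, hb]

lemma klTerm_ne_bot (a b : ℝ≥0) : klTerm a b ≠ ⊥ := by
  unfold klTerm; split_ifs
  · simp
  · simp
  · rw [show ((((a : ℝ) * Real.log ((a : ℝ) / (b : ℝ)) - (a : ℝ) + (b : ℝ) : ℝ)) : EReal)
      = (((a : ℝ) * Real.log ((a : ℝ) / (b : ℝ)) - (a : ℝ) + (b : ℝ) : ℝ) : EReal) from rfl]
    exact EReal.coe_ne_bot _

lemma ereal_sum_ne_bot {ι : Type*} (s : Finset ι) (f : ι → EReal)
    (hb : ∀ i ∈ s, f i ≠ ⊥) : ∑ i ∈ s, f i ≠ ⊥ := by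
  classical
  induction s using Finset.induction with
  | empty => simp
  | @insert a s' hx ih =>
    rw [Finset.sum_insert hx]
    intro hc
    rcases EReal.add_eq_bot_iff.1 hc with h | h
    · exact hb a (Finset.mem_insert_self a s') h
    · exact ih (fun i hi => hb i (Finset.mem_insert_of_mem hi)) h

lemma ereal_sum_eq_top {ι : Type*} (s : Finset ι) (f : ι → EReal)
    (hb : ∀ i ∈ s, f i ≠ ⊥) {i₀ : ι} (hi : i₀ ∈ s) (ht : f i₀ = ⊤) :
    ∑ i ∈ s, f i = ⊤ := by
  classical
  rw [← Finset.add_sum_erase s f hi, ht]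
  exact EReal.top_add_of_ne_bot (ereal_sum_ne_bot _ _
    (fun i hi' => hb i (Finset.mem_of_mem_erase hi')))

lemma ereal_sum_coe {ι : Type*} (s : Finset ι) (f : ι → ℝ) :
    ∑ i ∈ s, ((f i : ℝ) : EReal) = ((∑ i ∈ s, f i : ℝ) : EReal) := by
  classical
  induction s using Finset.induction with
  | empty => simp
  | @insert a s' hx ih => rw [Finset.sum_insert hx, Finset.sum_insert hx, ih, EReal.coe_add]

lemma key {κ : ℝ} (hκ : 0 < κ) {gr : ℝ≥0} (hg : 0 < gr) {uu vv : ℝ}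
    (hu : uu ≤ κ * (gr : ℝ) * (1 - Real.exp (vv / κ))) (a b : ℝ≥0)
    (hc : b = 0 ∨ gr * a ≠ 0) :
    uu * (a : ℝ) + vv * (b : ℝ) ≤ κ * klReal b (gr * a) := by
  have he : (0 : ℝ) < Real.exp (vv / κ) := Real.exp_pos _
  have ha0 : (0 : ℝ) ≤ (a : ℝ) := a.coe_nonneg
  by_cases hb : b = 0
  · subst hb
    simp only [klReal, if_pos rfl, NNReal.coe_mul, NNReal.coe_zero, mul_zero, add_zero, if_true]
    nlinarith [mul_le_mul_of_nonneg_right hu ha0,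
      mul_nonneg (mul_nonneg (mul_nonneg hκ.le gr.coe_nonneg) ha0) he.le]
  · have hcne : gr * a ≠ 0 := hc.resolve_left hb
    have hane : a ≠ 0 := by
      intro h; exact hcne (by simp [h])
    have hbpos : (0 : ℝ) < (b : ℝ) := by positivity
    have hapos : (0 : ℝ) < (a : ℝ) := by positivity
    have hgpos : (0 : ℝ) < (gr : ℝ) := hg
    have hcpos : (0 : ℝ) < ((gr * a : ℝ≥0) : ℝ) := by
      push_cast; positivity
    set c : ℝ := ((gr * a : ℝ≥0) : ℝ) with hcdef
    have hcval : c = (gr : ℝ) * (a : ℝ) := by rw [hcdef]; push_cast; ring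
    simp only [klReal, if_neg hb]
    set L := Real.log ((b : ℝ) / c) with hL
    have hlog := Real.log_le_sub_one_of_pos
      (show (0:ℝ) < c * Real.exp (vv / κ) / (b : ℝ) by positivity)
    have heq : Real.log (c * Real.exp (vv / κ) / (b : ℝ)) = vv / κ - L := by
      rw [hL, Real.log_div (by positivity) hbpos.ne', Real.log_mul hcpos.ne'
        (Real.exp_ne_zero _), Real.log_exp, Real.log_div hbpos.ne' hcpos.ne']
      ring
    rw [heq] at hlog
    have h1 : κ * (b : ℝ) * (vv / κ - L) ≤ κ * (b : ℝ) * (c * Real.exp (vv / κ) / (b : ℝ) - 1) :=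
      mul_le_mul_of_nonneg_left hlog (by positivity)
    have h2 : κ * (b : ℝ) * (vv / κ - L) = vv * (b : ℝ) - κ * (b : ℝ) * L := by
      field_simp
    have h3 : κ * (b : ℝ) * (c * Real.exp (vv / κ) / (b : ℝ) - 1)
        = κ * c * Real.exp (vv / κ) - κ * (b : ℝ) := by
      field_simp
    have h4 : uu * (a : ℝ) ≤ κ * c - κ * c * Real.exp (vv / κ) := by
      have := mul_le_mul_of_nonneg_right hu ha0
      rw [hcval]; nlinarith
    linarith [h1, h2 ▸ h1]

/-- With `G(α, β) = κ·KL(β | g⊙α)` for `κ > 0` and `g ∈ (0,∞)ⁿ`, the convex conjugate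
`sup {⟨u,α⟩ + ⟨v,β⟩ − G(α,β)}` equals `0` if `uᵢ ≤ κ·gᵢ·(1 − exp(vᵢ/κ))` for every `i`,
and `+∞` otherwise. -/
theorem softBranching_conjugate (n : ℕ) (hn : 1 ≤ n) (κ : ℝ) (hκ : 0 < κ)
    (g : Fin n → ℝ≥0) (hg : ∀ i, 0 < g i) (u v : Fin n → ℝ) :
    (⨆ (α : Fin n → ℝ≥0) (β : Fin n → ℝ≥0),
        ((((∑ i, u i * (α i : ℝ)) + ∑ i, v i * (β i : ℝ) : ℝ) : EReal)
          - (κ : EReal) * ∑ i, klTerm (β i) (g i * α i)))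
    = if ∀ i, u i ≤ κ * (g i : ℝ) * (1 - Real.exp (v i / κ)) then 0 else ⊤ := by
  by_cases h : ∀ i, u i ≤ κ * (g i : ℝ) * (1 - Real.exp (v i / κ))
  · rw [if_pos h]
    apply le_antisymm
    · refine iSup_le fun α => iSup_le fun β => ?_
      by_cases htop : ∃ i, β i ≠ 0 ∧ g i * α i = 0
      · obtain ⟨i, hbi, hci⟩ := htop
        rw [ereal_sum_eq_top Finset.univ (fun j => klTerm (β j) (g j * α j))
          (fun j _ => klTerm_ne_bot _ _) (Finset.mem_univ i) (klTerm_eq_top hbi hci),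
          EReal.mul_top_of_pos (by exact_mod_cast hκ), EReal.sub_top]
        exact bot_le
      · push_neg at htop
        rw [Finset.sum_congr rfl (fun i _ => klTerm_eq_coe
          (if hb : β i = 0 then Or.inl hb else Or.inr (htop i hb))),
          ereal_sum_coe, ← EReal.coe_mul, ← EReal.coe_sub]
        rw [show (0 : EReal) = ((0 : ℝ) : EReal) from rfl, EReal.coe_le_coe_iff]
        rw [sub_nonpos, Finset.mul_sum, ← Finset.sum_add_distrib]
        exact Finset.sum_le_sum fun i _ => key hκ (hg i) (h i) (α i) (β i)
          (if hb : β i = 0 then Or.inl hb else Or.inr (htop i hb))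
    · refine le_iSup_of_le (fun _ => 0) (le_iSup_of_le (fun _ => 0) ?_)
      have hval : ((((∑ i, u i * (((fun _ : Fin n => (0:ℝ≥0)) i) : ℝ)) +
          ∑ i, v i * (((fun _ : Fin n => (0:ℝ≥0)) i) : ℝ) : ℝ) : EReal)
          - (κ : EReal) * ∑ i, klTerm (((fun _ : Fin n => (0:ℝ≥0)) i))
            (g i * ((fun _ : Fin n => (0:ℝ≥0)) i))) = 0 := by
        simp [klTerm]
      exact hval.ge
  · rw [if_neg h]
    rw [EReal.eq_top_iff_forall_lt]
    intro M
    push_neg at h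
    obtain ⟨i₀, hi₀⟩ := h
    set δ : ℝ := u i₀ - κ * (g i₀ : ℝ) * (1 - Real.exp (v i₀ / κ)) with hδ
    have hδpos : 0 < δ := by rw [hδ]; linarith
    set t : ℝ := max 1 ((M + 1) / δ) with ht
    have ht1 : (1:ℝ) ≤ t := le_max_left _ _
    have htpos : 0 < t := lt_of_lt_of_le one_pos ht1
    have htd : M < t * δ := by
      have h1 : (M + 1) / δ ≤ t := le_max_right _ _
      have := (div_le_iff₀ hδpos).1 h1
      linarith
    have hgp : (0:ℝ) < (g i₀ : ℝ) := hg i₀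
    have hep : (0:ℝ) < Real.exp (v i₀ / κ) := Real.exp_pos _
    set b : ℝ := t * (g i₀ : ℝ) * Real.exp (v i₀ / κ) with hbdef
    have hbpos : 0 < b := by positivity
    set α : Fin n → ℝ≥0 := fun j => if j = i₀ then Real.toNNReal t else 0 with hα
    set β : Fin n → ℝ≥0 := fun j => if j = i₀ then Real.toNNReal b else 0 with hβ
    have hαc : ∀ j, ((α j : ℝ)) = if j = i₀ then t else 0 := by
      intro j; by_cases hj : j = i₀ <;> simp [hα, hj, Real.coe_toNNReal, htpos.le]
    have hβc : ∀ j, ((β j : ℝ)) = if j = i₀ then b else 0 := by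
      intro j; by_cases hj : j = i₀ <;> simp [hβ, hj, Real.coe_toNNReal, hbpos.le]
    have hSu : (∑ i, u i * (α i : ℝ)) = u i₀ * t := by
      rw [Finset.sum_eq_single i₀]
      · rw [hαc i₀, if_pos rfl]
      · intro j _ hj; rw [hαc j, if_neg hj, mul_zero]
      · intro hj; exact absurd (Finset.mem_univ i₀) hj
    have hSv : (∑ i, v i * (β i : ℝ)) = v i₀ * b := by
      rw [Finset.sum_eq_single i₀]
      · rw [hβc i₀, if_pos rfl]
      · intro j _ hj; rw [hβc j, if_neg hj, mul_zero]
      · intro hj; exact absurd (Finset.mem_univ i₀) hj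
    have hklother : ∀ j, j ≠ i₀ → klTerm (β j) (g j * α j) = 0 := by
      intro j hj
      have h1 : β j = 0 := by simp [hβ, hj]
      have h2 : α j = 0 := by simp [hα, hj]
      rw [h1, h2, mul_zero]
      simp [klTerm]
    have hb0 : β i₀ ≠ 0 := by
      simp only [hβ, if_pos rfl]
      exact fun hc => by simp [Real.toNNReal_eq_zero] at hc; linarith
    have hc0 : ((g i₀ * α i₀ : ℝ≥0) : ℝ) = (g i₀ : ℝ) * t := by
      push_cast
      rw [hαc i₀, if_pos rfl]
    have hcne : g i₀ * α i₀ ≠ 0 := by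
      intro hc
      have h3 := congrArg (fun x : ℝ≥0 => (x:ℝ)) hc
      simp only [NNReal.coe_zero] at h3
      rw [hc0] at h3
      nlinarith
    have hβv : ((β i₀ : ℝ)) = b := by rw [hβc i₀, if_pos rfl]
    have hbc : b / ((g i₀ : ℝ) * t) = Real.exp (v i₀ / κ) := by
      rw [hbdef]; field_simp
    have hklmain : klTerm (β i₀) (g i₀ * α i₀)
        = (((b * (v i₀ / κ) - b + (g i₀ : ℝ) * t : ℝ)) : EReal) := by
      rw [klTerm_eq_coe (Or.inr hcne)]
      congr 1
      rw [klReal, if_neg hb0, hc0, hβv, hbc, Real.log_exp]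
    have hsum : (∑ i, klTerm (β i) (g i * α i))
        = (((b * (v i₀ / κ) - b + (g i₀ : ℝ) * t : ℝ)) : EReal) := by
      rw [Finset.sum_eq_single i₀ (fun j _ hj => hklother j hj)
        (fun hj => absurd (Finset.mem_univ i₀) hj), hklmain]
    have hexpr : ((((∑ i, u i * (α i : ℝ)) + ∑ i, v i * (β i : ℝ) : ℝ) : EReal)
          - (κ : EReal) * ∑ i, klTerm (β i) (g i * α i)) = ((t * δ : ℝ) : EReal) := by
      rw [hSu, hSv, hsum, ← EReal.coe_mul, ← EReal.coe_sub]
      congr 1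
      rw [hδ, hbdef]
      field_simp
      ring
    refine lt_of_lt_of_le (lt_of_lt_of_eq
      (show (M : EReal) < ((t * δ : ℝ) : EReal) by exact_mod_cast htd) hexpr.symm) ?_
    exact le_iSup_of_le α (le_iSup_of_le β le_rfl)
end

section
/- Let x₁, …, x_n ∈ ℝ^d, ε > 0, and let K be the Gibbs kernel K_{ij} = exp(−‖xᵢ − xⱼ‖²/(2ε)). For α, β ∈ [0,∞)ⁿ define the discrete entropy-regularized optimal transport cost OT_ε(α, β) = inf{ε·Σ_{ij} γ_{ij}·log(γ_{ij}/K_{ij}) − ε·Σ_{ij} γ_{ij} : γ ∈ Π(α,β)}. Then for all u, v ∈ ℝⁿ, sup{⟨u,α⟩ + ⟨v,β⟩ − OT_ε(α,β) : α, β ∈ [0,∞)ⁿ} = ε·Σ_{ij} exp(uᵢ/ε)·K_{ij}·exp(vⱼ/ε). -/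
open scoped ENNReal NNReal Classical BigOperators

/-- The Gibbs kernel `K_{ij} = exp(−‖xᵢ − xⱼ‖²/(2ε))`. -/
noncomputable def gibbsK {n d : ℕ} (x : Fin n → EuclideanSpace ℝ (Fin d)) (ε : ℝ)
    (i j : Fin n) : ℝ :=
  Real.exp (-‖x i - x j‖ ^ 2 / (2 * ε))

/-- The discrete entropy-regularized optimal transport cost
`OT_ε(α, β) = inf {ε·Σ_{ij} γ_{ij}·log(γ_{ij}/K_{ij}) − ε·Σ_{ij} γ_{ij} : γ ∈ Π(α,β)}`
(the infimum over the empty set being `+∞`).  Terms with `γ_{ij} = 0` contribute `0`. -/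
noncomputable def OTeps {n d : ℕ} (x : Fin n → EuclideanSpace ℝ (Fin d)) (ε : ℝ)
    (α β : Fin n → ℝ≥0) : EReal :=
  ⨅ γ : {γ : Fin n → Fin n → ℝ≥0 //
      (∀ i, ∑ j, γ i j = α i) ∧ (∀ j, ∑ i, γ i j = β j)},
    ((ε * ∑ i, ∑ j, (γ.1 i j : ℝ) * Real.log ((γ.1 i j : ℝ) / gibbsK x ε i j)
        - ε * ∑ i, ∑ j, (γ.1 i j : ℝ) : ℝ) : EReal)

lemma OT_key (ε : ℝ) (hε : 0 < ε) (c K t : ℝ) (hK : 0 < K) (ht : 0 ≤ t) :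
    c * t - ε * (t * Real.log (t / K)) + ε * t ≤ ε * (K * Real.exp (c / ε)) := by
  rcases ht.eq_or_lt with h | h
  · simp [← h]
    positivity
  · have hx := Real.add_one_le_exp (c / ε - Real.log (t / K))
    have h2 : Real.exp (c / ε - Real.log (t / K)) = Real.exp (c / ε) * (K / t) := by
      rw [Real.exp_sub, Real.exp_log (by positivity)]
      field_simp
    have hmul := mul_le_mul_of_nonneg_left hx (le_of_lt (mul_pos hε h))
    have hL : ε * t * (c / ε - Real.log (t / K) + 1)
        = c * t - ε * (t * Real.log (t / K)) + ε * t := by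
      field_simp
    have hR : ε * t * Real.exp (c / ε - Real.log (t / K)) = ε * (K * Real.exp (c / ε)) := by
      rw [h2]; field_simp
    rw [hL, hR] at hmul
    exact hmul


set_option maxHeartbeats 2000000 in
/-- The convex conjugate of the entropic optimal transport cost:
`sup {⟨u,α⟩ + ⟨v,β⟩ − OT_ε(α,β) : α, β ∈ [0,∞)ⁿ} = ε·Σ_{ij} exp(uᵢ/ε)·K_{ij}·exp(vⱼ/ε)`. -/
theorem OTeps_conjugate (n d : ℕ) (hn : 1 ≤ n) (x : Fin n → EuclideanSpace ℝ (Fin d))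
    (ε : ℝ) (hε : 0 < ε) (u v : Fin n → ℝ) :
    (⨆ (α : Fin n → ℝ≥0) (β : Fin n → ℝ≥0),
        ((((∑ i, u i * (α i : ℝ)) + ∑ i, v i * (β i : ℝ) : ℝ) : EReal) - OTeps x ε α β))
    = ((ε * ∑ i, ∑ j, Real.exp (u i / ε) * gibbsK x ε i j * Real.exp (v j / ε) : ℝ) : EReal) := by
  have hK : ∀ i j, 0 < gibbsK x ε i j := fun i j => Real.exp_pos _
  set R : ℝ := ε * ∑ i, ∑ j, Real.exp (u i / ε) * gibbsK x ε i j * Real.exp (v j / ε) with hR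
  have hexp : ∀ i j, Real.exp (u i / ε) * gibbsK x ε i j * Real.exp (v j / ε)
      = gibbsK x ε i j * Real.exp ((u i + v j) / ε) := by
    intro i j
    rw [add_div, Real.exp_add]; ring
  apply le_antisymm
  · refine iSup_le fun α => iSup_le fun β => ?_
    set c : ℝ := (∑ i, u i * (α i : ℝ)) + ∑ i, v i * (β i : ℝ) with hc
    have hI : ((c - R : ℝ) : EReal) ≤ OTeps x ε α β := by
      rw [OTeps]
      refine le_iInf fun γ => ?_
      rw [EReal.coe_le_coe_iff]
      have hα : ∀ i, (α i : ℝ) = ∑ j, (γ.1 i j : ℝ) := fun i => by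
        rw [← γ.2.1 i]; push_cast; ring
      have hβ : ∀ j, (β j : ℝ) = ∑ i, (γ.1 i j : ℝ) := fun j => by
        rw [← γ.2.2 j]; push_cast; ring
      have e1 : ∑ i, u i * (α i : ℝ) = ∑ i, ∑ j, u i * (γ.1 i j : ℝ) := by
        simp [hα, Finset.mul_sum]
      have e2 : ∑ j, v j * (β j : ℝ) = ∑ i, ∑ j, v j * (γ.1 i j : ℝ) := by
        rw [Finset.sum_comm]
        simp [hβ, Finset.mul_sum]
      have big : ∑ i, ∑ j, (u i * (γ.1 i j : ℝ) + v j * (γ.1 i j : ℝ)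
            - ε * ((γ.1 i j : ℝ) * Real.log ((γ.1 i j : ℝ) / gibbsK x ε i j))
            + ε * (γ.1 i j : ℝ))
          ≤ ∑ i, ∑ j, ε * (Real.exp (u i / ε) * gibbsK x ε i j * Real.exp (v j / ε)) := by
        refine Finset.sum_le_sum fun i _ => Finset.sum_le_sum fun j _ => ?_
        have hk := OT_key ε hε (u i + v j) (gibbsK x ε i j) ((γ.1 i j : ℝ)) (hK i j)
          (γ.1 i j).coe_nonneg
        have hdist : (u i + v j) * (γ.1 i j : ℝ)
            = u i * (γ.1 i j : ℝ) + v j * (γ.1 i j : ℝ) := by ring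
        rw [hexp i j]
        linarith [hk, hdist]
      rw [e1, e2] at hc
      simp only [Finset.sum_add_distrib, Finset.sum_sub_distrib, ← Finset.mul_sum]
        at big hc
      rw [hc, hR]
      linarith [big]
    calc ((c : ℝ) : EReal) - OTeps x ε α β
        ≤ ((c : ℝ) : EReal) - ((c - R : ℝ) : EReal) := EReal.sub_le_sub le_rfl hI
      _ = ((R : ℝ) : EReal) := by rw [← EReal.coe_sub]; norm_num
  · obtain ⟨γ0, hg⟩ : ∃ γ0 : Fin n → Fin n → ℝ≥0,
        ∀ i j, (γ0 i j : ℝ) = gibbsK x ε i j * Real.exp ((u i + v j) / ε) :=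
      ⟨fun i j => ⟨gibbsK x ε i j * Real.exp ((u i + v j) / ε),
        (mul_pos (hK i j) (Real.exp_pos _)).le⟩, fun i j => rfl⟩
    obtain ⟨α0, hα0⟩ : ∃ α0 : Fin n → ℝ≥0, ∀ i, α0 i = ∑ j, γ0 i j := ⟨_, fun i => rfl⟩
    obtain ⟨β0, hβ0⟩ : ∃ β0 : Fin n → ℝ≥0, ∀ j, β0 j = ∑ i, γ0 i j := ⟨_, fun j => rfl⟩
    obtain ⟨fval, hfv⟩ : ∃ f : ℝ,
        f = ε * ∑ i, ∑ j, (γ0 i j : ℝ) * Real.log ((γ0 i j : ℝ) / gibbsK x ε i j)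
          - ε * ∑ i, ∑ j, (γ0 i j : ℝ) := ⟨_, rfl⟩
    have h1 : OTeps x ε α0 β0 ≤ ((fval : ℝ) : EReal) := by
      rw [OTeps]
      refine iInf_le_of_le ⟨γ0, fun i => (hα0 i).symm, fun j => (hβ0 j).symm⟩ ?_
      rw [hfv]
    set c0 : ℝ := (∑ i, u i * (α0 i : ℝ)) + ∑ i, v i * (β0 i : ℝ) with hc0
    have heq : c0 - fval = R := by
      have hlog : ∀ i j, (γ0 i j : ℝ) * Real.log ((γ0 i j : ℝ) / gibbsK x ε i j)
          = (γ0 i j : ℝ) * ((u i + v j) / ε) := by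
        intro i j
        rw [hg i j, mul_div_cancel_left₀ _ (hK i j).ne', Real.log_exp]
      have hαc : ∀ i, (α0 i : ℝ) = ∑ j, (γ0 i j : ℝ) := fun i => by
        rw [hα0 i]; push_cast; ring
      have hβc : ∀ j, (β0 j : ℝ) = ∑ i, (γ0 i j : ℝ) := fun j => by
        rw [hβ0 j]; push_cast; ring
      have e1 : ∑ i, u i * (α0 i : ℝ) = ∑ i, ∑ j, u i * (γ0 i j : ℝ) := by
        simp [hαc, Finset.mul_sum]
      have e2 : ∑ j, v j * (β0 j : ℝ) = ∑ i, ∑ j, v j * (γ0 i j : ℝ) := by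
        rw [Finset.sum_comm]
        simp [hβc, Finset.mul_sum]
      have e3 : ∑ i, ∑ j, (γ0 i j : ℝ) * Real.log ((γ0 i j : ℝ) / gibbsK x ε i j)
          = ∑ i, ∑ j, (γ0 i j : ℝ) * ((u i + v j) / ε) :=
        Finset.sum_congr rfl fun i _ => Finset.sum_congr rfl fun j _ => hlog i j
      have e4 : ∑ i, ∑ j, ((u i * (γ0 i j : ℝ) + v j * (γ0 i j : ℝ))
            - (ε * ((γ0 i j : ℝ) * ((u i + v j) / ε)) - ε * (γ0 i j : ℝ)))
          = ∑ i, ∑ j, ε * (Real.exp (u i / ε) * gibbsK x ε i j * Real.exp (v j / ε)) := by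
        refine Finset.sum_congr rfl fun i _ => Finset.sum_congr rfl fun j _ => ?_
        rw [hexp i j, hg i j]
        field_simp
        ring
      rw [e1, e2] at hc0
      rw [hfv, e3]
      simp only [Finset.sum_add_distrib, Finset.sum_sub_distrib, ← Finset.mul_sum]
        at e4 hc0
      rw [hc0, hR]
      linarith [e4]
    refine le_iSup_of_le α0 (le_iSup_of_le β0 ?_)
    calc ((R : ℝ) : EReal) = ((c0 - fval : ℝ) : EReal) := by rw [heq]
      _ = ((c0 : ℝ) : EReal) - ((fval : ℝ) : EReal) := EReal.coe_sub _ _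
      _ ≤ ((c0 : ℝ) : EReal) - OTeps x ε α0 β0 := EReal.sub_le_sub le_rfl h1
end

section
/- Let K̄ be an n×n row-stochastic matrix with strictly positive entries (Σⱼ K̄_{ij} = 1 for every i). For γ ∈ [0,∞)^{n×n} with row sums aᵢ = Σ_k γ_{ik}, define h(γ) = Σ_{ij} γ_{ij}·log(γ_{ij}/(aᵢ·K̄_{ij})) (terms with γ_{ij} = 0 contribute 0). Then for every matrix X ∈ ℝ^{n×n}, sup{Σ_{ij} X_{ij}·γ_{ij} − h(γ) : γ ∈ [0,∞)^{n×n}} equals 0 if log(Σⱼ K̄_{ij}·exp(X_{ij})) ≤ 0 for every i, and equals +∞ otherwise. -/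
open scoped ENNReal NNReal Classical BigOperators

private lemma term_bound (g a K x : ℝ) (hg : 0 ≤ g) (ha : 0 ≤ a) (hag : g ≤ a) (hK : 0 < K) :
    x * g - g * Real.log (g / (a * K)) ≤ a * K * Real.exp x - g := by
  rcases eq_or_lt_of_le hg with h0 | h0
  · rw [← h0]
    simp only [mul_zero, zero_mul, sub_zero]
    have : 0 ≤ a * K := mul_nonneg ha hK.le
    positivity
  · have ha' : 0 < a := lt_of_lt_of_le h0 hag
    have hc : 0 < a * K * Real.exp x := by positivity
    have hlog : Real.log (a * K * Real.exp x / g) ≤ a * K * Real.exp x / g - 1 :=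
      Real.log_le_sub_one_of_pos (by positivity)
    have heq : x * g - g * Real.log (g / (a * K)) = g * Real.log (a * K * Real.exp x / g) := by
      rw [Real.log_div h0.ne' (by positivity : (a*K:ℝ) ≠ 0),
        Real.log_div hc.ne' h0.ne', Real.log_mul (by positivity : (a*K:ℝ) ≠ 0)
          (Real.exp_ne_zero x), Real.log_exp]
      ring
    rw [heq]
    calc g * Real.log (a * K * Real.exp x / g) ≤ g * (a * K * Real.exp x / g - 1) :=
          mul_le_mul_of_nonneg_left hlog hg
      _ = a * K * Real.exp x - g := by field_simp

/-- For an `n×n` row-stochastic matrix `K̄` with strictly positive entries and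
`h(γ) = Σ_{ij} γ_{ij}·log(γ_{ij}/(aᵢ·K̄_{ij}))` where `aᵢ = Σ_k γ_{ik}` (terms with
`γ_{ij} = 0` contributing `0`), the convex conjugate
`sup {Σ_{ij} X_{ij}·γ_{ij} − h(γ) : γ ∈ [0,∞)^{n×n}}` equals `0` if
`log(Σⱼ K̄_{ij}·exp(X_{ij})) ≤ 0` for every `i`, and `+∞` otherwise. -/
theorem conditionalEntropy_conjugate (n : ℕ) (hn : 1 ≤ n) (Kbar : Fin n → Fin n → ℝ)
    (hpos : ∀ i j, 0 < Kbar i j) (hrow : ∀ i, ∑ j, Kbar i j = 1)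
    (X : Fin n → Fin n → ℝ) :
    (⨆ γ : Fin n → Fin n → ℝ≥0,
        (((∑ i, ∑ j, X i j * (γ i j : ℝ)
            - ∑ i, ∑ j, (γ i j : ℝ) *
                Real.log ((γ i j : ℝ) / ((∑ k, (γ i k : ℝ)) * Kbar i j)) : ℝ) : EReal)))
    = if ∀ i, Real.log (∑ j, Kbar i j * Real.exp (X i j)) ≤ 0 then 0 else ⊤ := by
  have hne : (Finset.univ : Finset (Fin n)).Nonempty := by
    simpa [Finset.univ_nonempty_iff] using Fin.pos_iff_nonempty.mp hn
  by_cases hZ : ∀ i, Real.log (∑ j, Kbar i j * Real.exp (X i j)) ≤ 0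
  · rw [if_pos hZ]
    apply le_antisymm
    · apply iSup_le
      intro γ
      have key : (∑ i, ∑ j, X i j * (γ i j : ℝ))
          - ∑ i, ∑ j, (γ i j : ℝ) *
              Real.log ((γ i j : ℝ) / ((∑ k, (γ i k : ℝ)) * Kbar i j)) ≤ 0 := by
        rw [← Finset.sum_sub_distrib]
        apply Finset.sum_nonpos
        intro i _
        set a : ℝ := ∑ k, (γ i k : ℝ) with ha_def
        have ha : 0 ≤ a := Finset.sum_nonneg fun k _ => (γ i k).coe_nonneg
        set Z : ℝ := ∑ j, Kbar i j * Real.exp (X i j) with hZ_def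
        have hZpos : 0 < Z :=
          Finset.sum_pos (fun j _ => mul_pos (hpos i j) (Real.exp_pos _)) hne
        have hZ1 : Z ≤ 1 := by
          have := hZ i
          rwa [Real.log_nonpos_iff hZpos.le] at this
        rw [← Finset.sum_sub_distrib]
        calc (∑ j, (X i j * (γ i j : ℝ) - (γ i j : ℝ) *
              Real.log ((γ i j : ℝ) / (a * Kbar i j))))
            ≤ ∑ j, (a * Kbar i j * Real.exp (X i j) - (γ i j : ℝ)) := by
              apply Finset.sum_le_sum
              intro j _
              exact term_bound _ _ _ _ (γ i j).coe_nonneg ha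
                (Finset.single_le_sum (fun k _ => (γ i k).coe_nonneg) (Finset.mem_univ j))
                (hpos i j)
          _ = a * Z - a := by
              have h' : (∑ j, a * Kbar i j * Real.exp (X i j)) = a * Z := by
                rw [hZ_def, Finset.mul_sum]
                exact Finset.sum_congr rfl fun j _ => by ring
              rw [Finset.sum_sub_distrib, h', ← ha_def]
          _ ≤ 0 := by nlinarith
      calc _ ≤ ((0 : ℝ) : EReal) := EReal.coe_le_coe_iff.mpr key
        _ = (0 : EReal) := by norm_num
    · refine le_trans ?_ (le_iSup _ (0 : Fin n → Fin n → ℝ≥0))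
      simp
  · rw [if_neg hZ]
    push_neg at hZ
    obtain ⟨i₀, hi₀⟩ := hZ
    set Z : ℝ := ∑ j, Kbar i₀ j * Real.exp (X i₀ j) with hZ_def
    have hZpos : 0 < Z :=
      Finset.sum_pos (fun j _ => mul_pos (hpos i₀ j) (Real.exp_pos _)) hne
    have hlogZ : 0 < Real.log Z := hi₀
    have hcpos : 0 < Z * Real.log Z := mul_pos hZpos hlogZ
    rw [iSup_eq_top]
    intro b hb
    obtain ⟨r, hbr, -⟩ := EReal.lt_iff_exists_real_btwn.mp hb
    obtain ⟨t, ht, htc⟩ : ∃ t : ℝ, 0 < t ∧ r < t * (Z * Real.log Z) := by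
      refine ⟨(|r| + 1) / (Z * Real.log Z), div_pos (by positivity) hcpos, ?_⟩
      rw [div_mul_cancel₀ _ hcpos.ne']
      exact lt_of_le_of_lt (le_abs_self r) (lt_add_one _)
    set γ : Fin n → Fin n → ℝ≥0 := fun i j =>
      Real.toNNReal (if i = i₀ then t * (Kbar i j * Real.exp (X i j)) else 0) with hγ_def
    have hcoe : ∀ i j, (γ i j : ℝ) = if i = i₀ then t * (Kbar i j * Real.exp (X i j)) else 0 := by
      intro i j
      rw [hγ_def]
      apply Real.coe_toNNReal
      split
      · exact mul_nonneg ht.le (mul_pos (hpos i j) (Real.exp_pos _)).le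
      · exact le_refl 0
    have hrowsum : ∀ i, (∑ k, (γ i k : ℝ)) = if i = i₀ then t * Z else 0 := by
      intro i
      by_cases h : i = i₀
      · subst h
        simp only [hcoe, if_true, eq_self_iff_true]
        rw [← Finset.mul_sum, hZ_def]
      · simp [hcoe, h]
    have h1 : (∑ i, ∑ j, X i j * (γ i j : ℝ))
        = ∑ j, X i₀ j * (t * (Kbar i₀ j * Real.exp (X i₀ j))) := by
      rw [Finset.sum_eq_single i₀]
      · simp [hcoe]
      · intro b _ hb'
        simp [hcoe, hb']
      · simp
    have h2 : (∑ i, ∑ j, (γ i j : ℝ) *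
          Real.log ((γ i j : ℝ) / ((∑ k, (γ i k : ℝ)) * Kbar i j)))
        = ∑ j, (t * (Kbar i₀ j * Real.exp (X i₀ j))) * (X i₀ j - Real.log Z) := by
      rw [Finset.sum_eq_single i₀]
      · apply Finset.sum_congr rfl
        intro j _
        rw [hcoe, hrowsum, if_pos rfl, if_pos rfl]
        congr 1
        have harg : t * (Kbar i₀ j * Real.exp (X i₀ j)) / (t * Z * Kbar i₀ j)
            = Real.exp (X i₀ j) / Z := by
          rw [div_eq_div_iff (mul_pos (mul_pos ht hZpos) (hpos i₀ j)).ne' hZpos.ne']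
          ring
        rw [harg, Real.log_div (Real.exp_ne_zero _) hZpos.ne', Real.log_exp]
      · intro b _ hb'
        simp [hcoe, hb']
      · simp
    have hval : (∑ i, ∑ j, X i j * (γ i j : ℝ))
        - (∑ i, ∑ j, (γ i j : ℝ) *
            Real.log ((γ i j : ℝ) / ((∑ k, (γ i k : ℝ)) * Kbar i j)))
        = t * (Z * Real.log Z) := by
      rw [h1, h2, ← Finset.sum_sub_distrib]
      have h3 : ∀ j ∈ Finset.univ, X i₀ j * (t * (Kbar i₀ j * Real.exp (X i₀ j)))
          - (t * (Kbar i₀ j * Real.exp (X i₀ j))) * (X i₀ j - Real.log Z)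
          = (t * Real.log Z) * (Kbar i₀ j * Real.exp (X i₀ j)) := by
        intro j _
        ring
      rw [Finset.sum_congr rfl h3, ← Finset.mul_sum, ← hZ_def]
      ring
    refine ⟨γ, ?_⟩
    rw [hval]
    exact lt_trans hbr (EReal.coe_lt_coe_iff.mpr htc)
end

section
/- Let x₁, …, x_n ∈ ℝ^d, ε > 0, and let K̄ be the row-normalized Gibbs kernel. For α, β ∈ [0,∞)ⁿ define the modified entropic optimal transport cost ÕT_ε(α, β) = inf{ε·Σ_{ij} γ_{ij}·log(γ_{ij}/(αᵢ·K̄_{ij})) : γ ∈ Π(α,β)}. Then for all u, v ∈ ℝⁿ, sup{⟨u,α⟩ + ⟨v,β⟩ − ÕT_ε(α,β) : α, β ∈ [0,∞)ⁿ} equals 0 if uᵢ ≤ −ε·log(Σⱼ K̄_{ij}·exp(vⱼ/ε)) for every i, and equals +∞ otherwise. -/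
open scoped ENNReal NNReal Classical BigOperators

/-- The row-normalized Gibbs kernel `K̄_{ij} = K_{ij}/Σ_k K_{ik}`. -/
noncomputable def gibbsKbar {n d : ℕ} (x : Fin n → EuclideanSpace ℝ (Fin d)) (ε : ℝ)
    (i j : Fin n) : ℝ :=
  gibbsK x ε i j / ∑ k, gibbsK x ε i k

/-- The modified entropic optimal transport cost
`ÕT_ε(α, β) = inf {ε·Σ_{ij} γ_{ij}·log(γ_{ij}/(αᵢ·K̄_{ij})) : γ ∈ Π(α,β)}`
(the infimum over the empty set being `+∞`).  Terms with `γ_{ij} = 0` contribute `0`. -/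
noncomputable def OTtilde {n d : ℕ} (x : Fin n → EuclideanSpace ℝ (Fin d)) (ε : ℝ)
    (α β : Fin n → ℝ≥0) : EReal :=
  ⨅ γ : {γ : Fin n → Fin n → ℝ≥0 //
      (∀ i, ∑ j, γ i j = α i) ∧ (∀ j, ∑ i, γ i j = β j)},
    ((ε * ∑ i, ∑ j, (γ.1 i j : ℝ) *
        Real.log ((γ.1 i j : ℝ) / ((α i : ℝ) * gibbsKbar x ε i j)) : ℝ) : EReal)

private lemma key_ineq (a c s : ℝ) (ha : 0 ≤ a) (hc : 0 < c) :
    a * s ≤ a * Real.log (a / c) + c * Real.exp s - a := by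
  rcases ha.eq_or_lt with h | h
  · rw [← h]
    simp only [zero_mul, zero_add, sub_zero]
    positivity
  · have h1 : s - Real.log (a / c) + 1 ≤ Real.exp (s - Real.log (a / c)) :=
      Real.add_one_le_exp _
    have h2 : a * Real.exp (s - Real.log (a / c)) = c * Real.exp s := by
      rw [Real.exp_sub, Real.exp_log (by positivity)]
      field_simp
    have h3 : a * (s - Real.log (a / c) + 1) ≤ c * Real.exp s := by
      rw [← h2]; exact mul_le_mul_of_nonneg_left h1 ha
    nlinarith [h3]

private lemma gibbsKbar_pos {n d : ℕ} (hn : 1 ≤ n) (x : Fin n → EuclideanSpace ℝ (Fin d))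
    (ε : ℝ) (i j : Fin n) : 0 < gibbsKbar x ε i j := by
  haveI : Nonempty (Fin n) := Fin.pos_iff_nonempty.mp hn
  exact div_pos (Real.exp_pos _)
    (Finset.sum_pos (fun k _ => Real.exp_pos _) Finset.univ_nonempty)

private lemma row_ineq {n d : ℕ} (hn : 1 ≤ n) (x : Fin n → EuclideanSpace ℝ (Fin d))
    {ε : ℝ} (hε : 0 < ε) (u v : Fin n → ℝ) (i : Fin n)
    (hcond : u i ≤ -ε * Real.log (∑ j, gibbsKbar x ε i j * Real.exp (v j / ε)))
    (α : ℝ≥0) (g : Fin n → ℝ≥0) (hg : ∑ j, g j = α) :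
    u i * (α : ℝ) + ∑ j, v j * (g j : ℝ) ≤
      ε * ∑ j, (g j : ℝ) * Real.log ((g j : ℝ) / ((α : ℝ) * gibbsKbar x ε i j)) := by
  haveI : Nonempty (Fin n) := Fin.pos_iff_nonempty.mp hn
  have hKbpos : ∀ j, 0 < gibbsKbar x ε i j := fun j => gibbsKbar_pos hn x ε i j
  set S := ∑ j, gibbsKbar x ε i j * Real.exp (v j / ε) with hSdef
  have hS : 0 < S :=
    Finset.sum_pos (fun j _ => mul_pos (hKbpos j) (Real.exp_pos _)) Finset.univ_nonempty
  rcases eq_zero_or_pos α with hα | hα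
  · subst hα
    have hg0 : ∀ j, g j = 0 := by
      intro j
      exact (Finset.sum_eq_zero_iff.mp hg) j (Finset.mem_univ j)
    simp [hg0]
  · have hαR : (0 : ℝ) < (α : ℝ) := NNReal.coe_pos.mpr hα
    have hsum : ∑ j, (g j : ℝ) = (α : ℝ) := by exact_mod_cast congrArg NNReal.toReal hg
    set E := ∑ j, (g j : ℝ) * Real.log ((g j : ℝ) / ((α : ℝ) * gibbsKbar x ε i j)) with hE
    have hkey : ∀ j ∈ Finset.univ, (g j : ℝ) * ((u i + v j) / ε) ≤
        (g j : ℝ) * Real.log ((g j : ℝ) / ((α : ℝ) * gibbsKbar x ε i j)) +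
          (α : ℝ) * gibbsKbar x ε i j * Real.exp ((u i + v j) / ε) - (g j : ℝ) := by
      intro j _
      exact key_ineq _ _ _ (g j).coe_nonneg (mul_pos hαR (hKbpos j))
    have hsum2 := Finset.sum_le_sum hkey
    have hsplit : ∑ j, ((g j : ℝ) * Real.log ((g j : ℝ) / ((α : ℝ) * gibbsKbar x ε i j)) +
          (α : ℝ) * gibbsKbar x ε i j * Real.exp ((u i + v j) / ε) - (g j : ℝ)) =
        E + (α : ℝ) * Real.exp (u i / ε) * S - (α : ℝ) := by
      rw [Finset.sum_sub_distrib, Finset.sum_add_distrib, hsum]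
      congr 1
      congr 1
      rw [hSdef, Finset.mul_sum]
      refine Finset.sum_congr rfl fun j _ => ?_
      rw [add_div, Real.exp_add]
      ring
    have hL : ε * ∑ j, (g j : ℝ) * ((u i + v j) / ε) =
        u i * (α : ℝ) + ∑ j, v j * (g j : ℝ) := by
      rw [Finset.mul_sum, ← hsum, Finset.mul_sum, ← Finset.sum_add_distrib]
      refine Finset.sum_congr rfl fun j _ => ?_
      field_simp
    have hexp : Real.exp (u i / ε) * S ≤ 1 := by
      have h1 : u i / ε ≤ -Real.log S := by
        rw [div_le_iff₀ hε]
        nlinarith [hcond]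
      have h2 := Real.exp_le_exp.mpr h1
      rw [Real.exp_neg, Real.exp_log hS] at h2
      calc Real.exp (u i / ε) * S ≤ S⁻¹ * S :=
            mul_le_mul_of_nonneg_right h2 hS.le
        _ = 1 := inv_mul_cancel₀ hS.ne'
    have h5 : (α : ℝ) * Real.exp (u i / ε) * S - (α : ℝ) ≤ 0 := by
      nlinarith [mul_le_mul_of_nonneg_left hexp hαR.le]
    rw [hsplit] at hsum2
    calc u i * (α : ℝ) + ∑ j, v j * (g j : ℝ)
        = ε * ∑ j, (g j : ℝ) * ((u i + v j) / ε) := hL.symm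
      _ ≤ ε * (E + (α : ℝ) * Real.exp (u i / ε) * S - (α : ℝ)) := by
          apply mul_le_mul_of_nonneg_left _ hε.le
          linarith [hsum2]
      _ ≤ ε * E := by nlinarith [h5, hε]

/-- The convex conjugate of the modified entropic optimal transport cost:
`sup {⟨u,α⟩ + ⟨v,β⟩ − ÕT_ε(α,β) : α, β ∈ [0,∞)ⁿ}` equals `0` if
`uᵢ ≤ −ε·log(Σⱼ K̄_{ij}·exp(vⱼ/ε))` for every `i`, and `+∞` otherwise. -/
theorem OTtilde_conjugate (n d : ℕ) (hn : 1 ≤ n) (x : Fin n → EuclideanSpace ℝ (Fin d))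
    (ε : ℝ) (hε : 0 < ε) (u v : Fin n → ℝ) :
    (⨆ (α : Fin n → ℝ≥0) (β : Fin n → ℝ≥0),
        ((((∑ i, u i * (α i : ℝ)) + ∑ i, v i * (β i : ℝ) : ℝ) : EReal) - OTtilde x ε α β))
    = if ∀ i, u i ≤ -ε * Real.log (∑ j, gibbsKbar x ε i j * Real.exp (v j / ε))
      then 0 else ⊤ := by
  haveI : Nonempty (Fin n) := Fin.pos_iff_nonempty.mp hn
  have hKbpos : ∀ i j, 0 < gibbsKbar x ε i j := fun i j => gibbsKbar_pos hn x ε i j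
  split_ifs with hcond
  · -- value is 0
    apply le_antisymm
    · refine iSup_le fun α => iSup_le fun β => ?_
      set L : ℝ := (∑ i, u i * (α i : ℝ)) + ∑ i, v i * (β i : ℝ) with hLdef
      have hge : ((L : ℝ) : EReal) ≤ OTtilde x ε α β := by
        refine le_iInf fun γ => ?_
        rw [EReal.coe_le_coe_iff]
        have hβ : ∑ j, v j * (β j : ℝ) = ∑ i, ∑ j, v j * (γ.1 i j : ℝ) := by
          rw [Finset.sum_comm]
          refine Finset.sum_congr rfl fun j _ => ?_
          rw [← γ.2.2 j, ← Finset.mul_sum]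
          push_cast
          ring
        have hrow : ∀ i : Fin n, u i * (α i : ℝ) + ∑ j, v j * (γ.1 i j : ℝ) ≤
            ε * ∑ j, (γ.1 i j : ℝ) *
              Real.log ((γ.1 i j : ℝ) / ((α i : ℝ) * gibbsKbar x ε i j)) :=
          fun i => row_ineq hn x hε u v i (hcond i) (α i) (γ.1 i) (γ.2.1 i)
        calc L = ∑ i, (u i * (α i : ℝ) + ∑ j, v j * (γ.1 i j : ℝ)) := by
              rw [hLdef, hβ, Finset.sum_add_distrib]
          _ ≤ ∑ i, ε * ∑ j, (γ.1 i j : ℝ) *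
                Real.log ((γ.1 i j : ℝ) / ((α i : ℝ) * gibbsKbar x ε i j)) :=
              Finset.sum_le_sum fun i _ => hrow i
          _ = ε * ∑ i, ∑ j, (γ.1 i j : ℝ) *
                Real.log ((γ.1 i j : ℝ) / ((α i : ℝ) * gibbsKbar x ε i j)) := by
              rw [Finset.mul_sum]
      calc ((L : ℝ) : EReal) - OTtilde x ε α β ≤ ((L : ℝ) : EReal) - ((L : ℝ) : EReal) :=
            EReal.sub_le_sub le_rfl hge
        _ = 0 := by rw [← EReal.coe_sub, sub_self]; rfl
    · -- sup ≥ 0 : take α = β = 0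
      have h0 : OTtilde x ε 0 0 = ((0 : ℝ) : EReal) := by
        unfold OTtilde
        haveI : Nonempty {γ : Fin n → Fin n → ℝ≥0 //
            (∀ i, ∑ j, γ i j = (0 : Fin n → ℝ≥0) i) ∧
            (∀ j, ∑ i, γ i j = (0 : Fin n → ℝ≥0) j)} :=
          ⟨⟨fun _ _ => 0, fun i => by simp, fun j => by simp⟩⟩
        rw [iInf_congr (g := fun _ => ((0 : ℝ) : EReal)) ?_, iInf_const]
        intro γ
        have hz : ∀ i j, γ.1 i j = 0 := by
          intro i j
          have h := γ.2.1 i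
          simp only [Pi.zero_apply] at h
          exact (Finset.sum_eq_zero_iff.mp h) j (Finset.mem_univ j)
        norm_cast
        simp [hz]
      refine le_iSup₂_of_le (0 : Fin n → ℝ≥0) (0 : Fin n → ℝ≥0) ?_
      rw [h0]
      simp
  · push_neg at hcond
    obtain ⟨i, hi⟩ := hcond
    set S := ∑ j, gibbsKbar x ε i j * Real.exp (v j / ε) with hSdef
    have hS : 0 < S :=
      Finset.sum_pos (fun j _ => mul_pos (hKbpos i j) (Real.exp_pos _)) Finset.univ_nonempty
    set c := u i + ε * Real.log S with hc
    have hcpos : 0 < c := by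
      rw [hc]
      nlinarith [hi]
    rw [EReal.eq_top_iff_forall_lt]
    intro r
    set t : ℝ := (|r| + 1) / c with ht
    have htpos : 0 < t := div_pos (by positivity) hcpos
    have htc : t * c = |r| + 1 := div_mul_cancel₀ _ hcpos.ne'
    set g : Fin n → ℝ≥0 :=
      fun j => Real.toNNReal (t * gibbsKbar x ε i j * Real.exp (v j / ε) / S) with hgdef
    have hgcoe : ∀ j, (g j : ℝ) = t * gibbsKbar x ε i j * Real.exp (v j / ε) / S := by
      intro j
      exact Real.coe_toNNReal _ (le_of_lt (div_pos (mul_pos (mul_pos htpos (hKbpos i j))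
        (Real.exp_pos _)) hS))
    have hgsum : ∑ j, (g j : ℝ) = t := by
      simp_rw [hgcoe, mul_assoc]
      rw [← Finset.sum_div, ← Finset.mul_sum, ← hSdef, mul_div_assoc, div_self hS.ne', mul_one]
    set A : Fin n → ℝ≥0 := fun k => if k = i then Real.toNNReal t else 0 with hA
    set γ : Fin n → Fin n → ℝ≥0 := fun k j => if k = i then g j else 0 with hγ
    have hrowc : ∀ k, ∑ j, γ k j = A k := by
      intro k
      by_cases hk : k = i
      · subst hk
        simp only [hγ, hA, if_pos rfl]
        refine NNReal.coe_injective ?_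
        push_cast
        rw [hgsum, Real.coe_toNNReal _ htpos.le]
      · simp [hγ, hA, hk]
    have hcolc : ∀ j, ∑ k, γ k j = g j := by
      intro j
      simp [hγ, Finset.sum_ite_eq']
    have hAcoe : (A i : ℝ) = t := by simp [hA, Real.coe_toNNReal _ htpos.le]
    have hLval : (∑ k, u k * (A k : ℝ)) + ∑ j, v j * (g j : ℝ) =
        u i * t + ∑ j, v j * (g j : ℝ) := by
      congr 1
      rw [Finset.sum_eq_single i]
      · rw [hAcoe]
      · intro k _ hk; simp [hA, hk]
      · intro h; exact absurd (Finset.mem_univ i) h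
    set Creal : ℝ := ε * ∑ k, ∑ j, (γ k j : ℝ) *
        Real.log ((γ k j : ℝ) / ((A k : ℝ) * gibbsKbar x ε k j)) with hCreal
    have hCval : Creal = (∑ j, v j * (g j : ℝ)) - ε * Real.log S * t := by
      rw [hCreal]
      have houter : ∑ k, ∑ j, (γ k j : ℝ) *
          Real.log ((γ k j : ℝ) / ((A k : ℝ) * gibbsKbar x ε k j)) =
          ∑ j, (g j : ℝ) * Real.log ((g j : ℝ) / ((A i : ℝ) * gibbsKbar x ε i j)) := by
        rw [Finset.sum_eq_single i]
        · refine Finset.sum_congr rfl fun j _ => ?_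
          simp [hγ]
        · intro k _ hk; simp [hγ, hk]
        · intro h; exact absurd (Finset.mem_univ i) h
      rw [houter]
      have hinner : ∀ j, (g j : ℝ) * Real.log ((g j : ℝ) / ((A i : ℝ) * gibbsKbar x ε i j)) =
          (g j : ℝ) * (v j / ε - Real.log S) := by
        intro j
        congr 1
        have hratio : (g j : ℝ) / ((A i : ℝ) * gibbsKbar x ε i j) =
            Real.exp (v j / ε) / S := by
          rw [hgcoe, hAcoe]
          have hKne := (hKbpos i j).ne'
          field_simp
        rw [hratio, Real.log_div (Real.exp_ne_zero _) hS.ne', Real.log_exp]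
      simp_rw [hinner]
      have hsplit : ∑ j, (g j : ℝ) * (v j / ε - Real.log S) =
          (∑ j, v j * (g j : ℝ)) / ε - Real.log S * t := by
        rw [← hgsum, Finset.mul_sum, Finset.sum_div, ← Finset.sum_sub_distrib]
        refine Finset.sum_congr rfl fun j _ => ?_
        ring
      rw [hsplit]
      field_simp
    have hOTle : OTtilde x ε A g ≤ ((Creal : ℝ) : EReal) :=
      iInf_le _ (⟨γ, hrowc, hcolc⟩ :
        {γ : Fin n → Fin n → ℝ≥0 //
          (∀ k, ∑ j, γ k j = A k) ∧ (∀ j, ∑ k, γ k j = g j)})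
    have hgap : (((∑ k, u k * (A k : ℝ)) + ∑ j, v j * (g j : ℝ) - Creal : ℝ) : EReal) ≤
        (((∑ k, u k * (A k : ℝ)) + ∑ j, v j * (g j : ℝ) : ℝ) : EReal) - OTtilde x ε A g := by
      rw [EReal.coe_sub]
      exact EReal.sub_le_sub le_rfl hOTle
    have hval : (∑ k, u k * (A k : ℝ)) + ∑ j, v j * (g j : ℝ) - Creal = t * c := by
      rw [hLval, hCval, hc]
      ring
    refine lt_of_lt_of_le ?_ (le_iSup₂_of_le A g hgap)
    rw [hval, htc]
    exact_mod_cast lt_of_le_of_lt (le_abs_self r) (by linarith)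
end

section
/- Let x₁, …, x_n ∈ ℝ^d, ε > 0, let K̄ be the row-normalized Gibbs kernel, and let π₀ ∈ (0,∞)ⁿ be a probability vector (Σᵢ (π₀)ᵢ = 1). Define the reference matrix Kᵢⱼ = (π₀)ᵢ·K̄ᵢⱼ and, for α, β ∈ [0,∞)ⁿ, the cost OT_ε(α, β; π₀) = inf{ε·Σ_{ij} γ_{ij}·log(γ_{ij}/K_{ij}) : γ ∈ Π(α,β)}. Then for all u, v ∈ ℝⁿ, sup{⟨u,α⟩ + ⟨v,β⟩ − OT_ε(α,β;π₀) : α, β ∈ [0,∞)ⁿ} = ε·Σ_{ij} exp(uᵢ/ε)·K_{ij}·exp(vⱼ/ε − 1). -/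
open scoped ENNReal NNReal Classical BigOperators

/-- The entropic optimal transport cost relative to the reference matrix
`K_{ij} = (π₀)ᵢ·K̄_{ij}`:
`OT_ε(α, β; π₀) = inf {ε·Σ_{ij} γ_{ij}·log(γ_{ij}/K_{ij}) : γ ∈ Π(α,β)}`
(the infimum over the empty set being `+∞`).  Terms with `γ_{ij} = 0` contribute `0`. -/
noncomputable def OTepsRef {n d : ℕ} (x : Fin n → EuclideanSpace ℝ (Fin d)) (ε : ℝ)
    (π₀ : Fin n → ℝ) (α β : Fin n → ℝ≥0) : EReal :=
  ⨅ γ : {γ : Fin n → Fin n → ℝ≥0 //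
      (∀ i, ∑ j, γ i j = α i) ∧ (∀ j, ∑ i, γ i j = β j)},
    ((ε * ∑ i, ∑ j, (γ.1 i j : ℝ) *
        Real.log ((γ.1 i j : ℝ) / (π₀ i * gibbsKbar x ε i j)) : ℝ) : EReal)

lemma key_ineq_s16 (t K c ε : ℝ) (ht : 0 ≤ t) (hK : 0 < K) (hε : 0 < ε) :
    t * c ≤ ε * (K * Real.exp (c / ε - 1)) + ε * (t * Real.log (t / K)) := by
  rcases eq_or_lt_of_le ht with h | h
  · rw [← h]
    simp
    positivity
  · have hlog : 0 < t / K := div_pos h hK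
    have h1 : c / ε - Real.log (t / K) ≤ Real.exp (c / ε - Real.log (t / K) - 1) := by
      have := Real.add_one_le_exp (c / ε - Real.log (t / K) - 1); linarith
    have h2 : ε * t * (c / ε - Real.log (t / K))
        ≤ ε * t * Real.exp (c / ε - Real.log (t / K) - 1) :=
      mul_le_mul_of_nonneg_left h1 (by positivity)
    have h3 : t * Real.exp (c / ε - Real.log (t / K) - 1) = K * Real.exp (c / ε - 1) := by
      rw [show c / ε - Real.log (t / K) - 1 = (c / ε - 1) + (-Real.log (t / K)) by ring,
        Real.exp_add, Real.exp_neg, Real.exp_log hlog, inv_div]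
      field_simp
    have h4 : ε * t * (c / ε - Real.log (t / K)) = t * c - ε * (t * Real.log (t / K)) := by
      field_simp
    nlinarith [h2, h3, h4]

/-- The convex conjugate of the entropic optimal transport cost with reference
`K_{ij} = (π₀)ᵢ·K̄_{ij}` for a strictly positive probability vector `π₀`:
`sup {⟨u,α⟩ + ⟨v,β⟩ − OT_ε(α,β;π₀)} = ε·Σ_{ij} exp(uᵢ/ε)·K_{ij}·exp(vⱼ/ε − 1)`. -/
theorem OTepsRef_conjugate (n d : ℕ) (hn : 1 ≤ n) (x : Fin n → EuclideanSpace ℝ (Fin d))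
    (ε : ℝ) (hε : 0 < ε) (π₀ : Fin n → ℝ) (hπ₀ : ∀ i, 0 < π₀ i) (hπ₀sum : ∑ i, π₀ i = 1)
    (u v : Fin n → ℝ) :
    (⨆ (α : Fin n → ℝ≥0) (β : Fin n → ℝ≥0),
        ((((∑ i, u i * (α i : ℝ)) + ∑ i, v i * (β i : ℝ) : ℝ) : EReal)
          - OTepsRef x ε π₀ α β))
    = ((ε * ∑ i, ∑ j, Real.exp (u i / ε) * (π₀ i * gibbsKbar x ε i j)
          * Real.exp (v j / ε - 1) : ℝ) : EReal) := by
  haveI : Nonempty (Fin n) := Fin.pos_iff_nonempty.mp hn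
  set Kr : Fin n → Fin n → ℝ := fun i j => π₀ i * gibbsKbar x ε i j with hKr
  have hKrdef : ∀ i j, π₀ i * gibbsKbar x ε i j = Kr i j := fun _ _ => rfl
  have hKpos : ∀ i j, 0 < Kr i j := by
    intro i j
    have h1 : 0 < gibbsK x ε i j := Real.exp_pos _
    have h2 : 0 < ∑ k, gibbsK x ε i k :=
      Finset.sum_pos (fun k _ => Real.exp_pos _) Finset.univ_nonempty
    exact mul_pos (hπ₀ i) (div_pos h1 h2)
  set gs : Fin n → Fin n → ℝ := fun i j => Kr i j * Real.exp ((u i + v j) / ε - 1) with hgs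
  have hgpos : ∀ i j, 0 < gs i j := fun i j => mul_pos (hKpos i j) (Real.exp_pos _)
  set S : ℝ := ε * ∑ i, ∑ j, gs i j with hS
  have hRHS : (ε * ∑ i, ∑ j, Real.exp (u i / ε) * (π₀ i * gibbsKbar x ε i j)
      * Real.exp (v j / ε - 1) : ℝ) = S := by
    rw [hS]
    congr 1
    refine Finset.sum_congr rfl fun i _ => Finset.sum_congr rfl fun j _ => ?_
    rw [hgs]
    simp only [hKr]
    rw [show (u i + v j) / ε - 1 = u i / ε + (v j / ε - 1) by field_simp; ring, Real.exp_add]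
    ring
  rw [hRHS]
  have hAsum : ∀ (γ : Fin n → Fin n → ℝ≥0) (α β : Fin n → ℝ≥0),
      (∀ i, ∑ j, γ i j = α i) → (∀ j, ∑ i, γ i j = β j) →
      (∑ i, u i * (α i : ℝ)) + ∑ i, v i * (β i : ℝ)
        = ∑ i, ∑ j, (γ i j : ℝ) * (u i + v j) := by
    intro γ α β hrow hcol
    have h1 : ∀ i, (α i : ℝ) = ∑ j, (γ i j : ℝ) := fun i => by
      rw [← hrow i]; push_cast; rfl
    have h2 : ∀ j, (β j : ℝ) = ∑ i, (γ i j : ℝ) := fun j => by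
      rw [← hcol j]; push_cast; rfl
    simp only [h1, h2, Finset.mul_sum]
    rw [Finset.sum_comm (s := Finset.univ) (t := Finset.univ)
      (f := fun i j => v i * (γ j i : ℝ)), ← Finset.sum_add_distrib]
    refine Finset.sum_congr rfl fun i _ => ?_
    rw [← Finset.sum_add_distrib]
    exact Finset.sum_congr rfl fun j _ => by ring
  apply le_antisymm
  · refine iSup_le fun α => iSup_le fun β => ?_
    set A : ℝ := (∑ i, u i * (α i : ℝ)) + ∑ i, v i * (β i : ℝ) with hA
    have hInf : ((A - S : ℝ) : EReal) ≤ OTepsRef x ε π₀ α β := by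
      refine le_iInf fun γ => ?_
      simp only [hKrdef]
      rw [EReal.coe_le_coe_iff]
      have hAeq := hAsum γ.1 α β γ.2.1 γ.2.2
      have hsum : ∑ i, ∑ j, (γ.1 i j : ℝ) * (u i + v j)
          ≤ ∑ i, ∑ j, (ε * (Kr i j * Real.exp ((u i + v j) / ε - 1))
            + ε * ((γ.1 i j : ℝ) * Real.log ((γ.1 i j : ℝ) / Kr i j))) :=
        Finset.sum_le_sum fun i _ => Finset.sum_le_sum fun j _ =>
          key_ineq_s16 _ _ _ _ (γ.1 i j).coe_nonneg (hKpos i j) hε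
      have hsplit : ∑ i, ∑ j, (ε * (Kr i j * Real.exp ((u i + v j) / ε - 1))
            + ε * ((γ.1 i j : ℝ) * Real.log ((γ.1 i j : ℝ) / Kr i j)))
          = S + ε * ∑ i, ∑ j, (γ.1 i j : ℝ) * Real.log ((γ.1 i j : ℝ) / Kr i j) := by
        rw [hS, hgs]
        simp only [Finset.mul_sum, ← Finset.sum_add_distrib]
      rw [hsplit] at hsum
      rw [← hA] at hAeq
      linarith [hAeq ▸ hsum]
    calc (A : EReal) - OTepsRef x ε π₀ α β
        ≤ (A : EReal) - ((A - S : ℝ) : EReal) := EReal.sub_le_sub le_rfl hInf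
      _ = ((S : ℝ) : EReal) := by rw [← EReal.coe_sub]; norm_num
  · set γN : Fin n → Fin n → ℝ≥0 := fun i j => ⟨gs i j, (hgpos i j).le⟩ with hγN
    set αs : Fin n → ℝ≥0 := fun i => ∑ j, γN i j with hαs
    set βs : Fin n → ℝ≥0 := fun j => ∑ i, γN i j with hβs
    have hrow : ∀ i, ∑ j, γN i j = αs i := fun i => by rw [hαs]
    have hcol : ∀ j, ∑ i, γN i j = βs j := fun j => by rw [hβs]
    set A : ℝ := (∑ i, u i * (αs i : ℝ)) + ∑ i, v i * (βs i : ℝ) with hA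
    have hAeq : A = ∑ i, ∑ j, gs i j * (u i + v j) := by
      rw [hA, hAsum γN αs βs hrow hcol]
      rfl
    have hterm : ∀ i j, (γN i j : ℝ) * Real.log ((γN i j : ℝ) / Kr i j)
        = gs i j * ((u i + v j) / ε - 1) := by
      intro i j
      have hc : (γN i j : ℝ) = gs i j := rfl
      rw [hc, show gs i j / Kr i j = Real.exp ((u i + v j) / ε - 1) by
        rw [hgs]; exact mul_div_cancel_left₀ _ (hKpos i j).ne', Real.log_exp]
    have hfstar : (ε * ∑ i, ∑ j, (γN i j : ℝ) *
        Real.log ((γN i j : ℝ) / Kr i j) : ℝ) = A - S := by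
      have h1 : (∑ i, ∑ j, (γN i j : ℝ) * Real.log ((γN i j : ℝ) / Kr i j))
          = ∑ i, ∑ j, gs i j * ((u i + v j) / ε - 1) :=
        Finset.sum_congr rfl fun i _ => Finset.sum_congr rfl fun j _ => hterm i j
      rw [h1, hAeq, hS]
      simp only [Finset.mul_sum, ← Finset.sum_sub_distrib]
      refine Finset.sum_congr rfl fun i _ => Finset.sum_congr rfl fun j _ => ?_
      field_simp
    refine le_trans ?_ (le_iSup _ αs)
    refine le_trans ?_ (le_iSup _ βs)
    have hOT : OTepsRef x ε π₀ αs βs ≤ ((A - S : ℝ) : EReal) := by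
      refine iInf_le_of_le ⟨γN, hrow, hcol⟩ ?_
      simp only [hKrdef]
      rw [EReal.coe_le_coe_iff, hfstar]
    calc ((S : ℝ) : EReal) = (A : EReal) - ((A - S : ℝ) : EReal) := by
          rw [← EReal.coe_sub]; norm_num
      _ ≤ (A : EReal) - OTepsRef x ε π₀ αs βs := EReal.sub_le_sub le_rfl hOT
end
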